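/- arXiv:1105.6187 — 4 statements merged into one kernel-verified Lean document; each statement's English description precedes it below -/
import Mathlib

section
/- Let X be a stable, conservative, non-explosive pure jump Markov process on a countable state space C ∪ {0}, with 0 absorbing and C a single transient class. Fix s ∈ C with p := inf_{k∈C} P_k[X hits s before 0] > 0 and T_k := E_k[τ_{{s,0}}] < ∞ for all k. For a probability distribution μ on C, let X^μ be the process that behaves like X on C but is instantaneously redistributed according to μ upon hitting 0, and let τ^μ_{{s}} be its first hitting time of s after leaving the starting set. Then, writing μ(T) := Σ_{k∈C} μ(k) T_k, one has μ(T) ≤ E^μ[τ^μ_{{s}}] ≤ μ(T)/p, where E^μ denotes expectation when X^μ(0) ∼ μ. -/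
/- Framework: a continuous-time Markov chain on a countable state space is given by
its jump rates `q : S → S → ℝ≥0∞`.  Hitting probabilities, expected hitting times
and occupation times (Green functions) are defined as the minimal nonnegative
solutions of the classical first-step systems, realised as pointwise infima over
all solutions. -/

open scoped ENNReal
open ENNReal

noncomputable section
open Classical
variable {S : Type*}

/-- Total jump rate out of a state. -/
def totalRate (q : S → S → ℝ≥0∞) (i : S) : ℝ≥0∞ := ∑' j, q i j

/-- Jump-chain transition probability. -/
def jumpP (q : S → S → ℝ≥0∞) (i j : S) : ℝ≥0∞ := q i j / totalRate q i

/-- `h` solves the first-step system for the probability of hitting `A` before `B`. -/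
def IsBeforeSol (q : S → S → ℝ≥0∞) (A B : Set S) (h : S → ℝ≥0∞) : Prop :=
  (∀ a ∈ A, h a = 1) ∧ (∀ b ∈ B, h b = 0) ∧
    (∀ j, j ∉ A → j ∉ B → h j = ∑' i, jumpP q j i * h i) ∧ (∀ j, h j ≤ 1)

/-- `P_k[X hits A before B]`: the minimal solution of the corresponding system. -/
def probBefore (q : S → S → ℝ≥0∞) (A B : Set S) (k : S) : ℝ≥0∞ :=
  ⨅ h ∈ {h | IsBeforeSol q A B h}, h k

/-- `T` solves the expected-hitting-time system for `A`. -/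
def IsHitTimeSol (q : S → S → ℝ≥0∞) (A : Set S) (T : S → ℝ≥0∞) : Prop :=
  (∀ a ∈ A, T a = 0) ∧
    ∀ j, j ∉ A → T j = (totalRate q j)⁻¹ + ∑' i, jumpP q j i * T i

/-- Expected hitting time of `A` from `k`: the minimal nonnegative solution. -/
def hitTime (q : S → S → ℝ≥0∞) (A : Set S) (k : S) : ℝ≥0∞ :=
  ⨅ T ∈ {T | IsHitTimeSol q A T}, T k

/-- Expected value of `τ_A` (first time in `A` after having been outside `A`)
starting from `k ∈ A`: hold at `k`, jump, then hit `A`. -/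
def retTime (q : S → S → ℝ≥0∞) (A : Set S) (k : S) : ℝ≥0∞ :=
  (totalRate q k)⁻¹ + ∑' i, jumpP q k i * hitTime q A i

/-- `T_k = E_k[τ_{{s,z}}]`, with the first-return convention on `{s,z}`. -/
def excT (q : S → S → ℝ≥0∞) (s z k : S) : ℝ≥0∞ :=
  if k = s ∨ k = z then retTime q {s, z} k else hitTime q {s, z} k

/-- `p_k = P_k[X_{τ_{{s,z}}} = s]`, the probability of reaching `s` before `z`. -/
def pHit (q : S → S → ℝ≥0∞) (s z k : S) : ℝ≥0∞ :=
  if k = s ∨ k = z then ∑' i, jumpP q k i * probBefore q {s} {z} i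
  else probBefore q {s} {z} k

/-- `p = inf_{k ∈ C} p_k`, the infimum over the non-cemetery states. -/
def pInf (q : S → S → ℝ≥0∞) (s z : S) : ℝ≥0∞ :=
  ⨅ k : {k : S // k ≠ z}, pHit q s z (k : S)

/-- Green-function system: expected time spent at `i` before hitting `A`. -/
def IsGreenSol (q : S → S → ℝ≥0∞) (A : Set S) (i : S) (G : S → ℝ≥0∞) : Prop :=
  (∀ a ∈ A, G a = 0) ∧
    ∀ j, j ∉ A →
      G j = (if j = i then (totalRate q j)⁻¹ else 0) + ∑' l, jumpP q j l * G l

/-- Expected time spent at `i` before hitting `A`, starting from `k`. -/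
def green (q : S → S → ℝ≥0∞) (A : Set S) (i k : S) : ℝ≥0∞ :=
  ⨅ G ∈ {G | IsGreenSol q A i G}, G k

/-- `T_{s i}`: expected time spent at `i` before `τ_{{s,z}}`, starting at `s`. -/
def occT (q : S → S → ℝ≥0∞) (s z i : S) : ℝ≥0∞ :=
  (if i = s then (totalRate q s)⁻¹ else 0) + ∑' j, jumpP q s j * green q {s, z} i j

/-- The returned process `X^μ`: `q^μ_{ij} = q_{ij} + q_{iz} μ_j` on `C = S \ {z}`;
the cemetery `z` becomes unreachable. -/
def retChain (q : S → S → ℝ≥0∞) (z : S) (μ : S → ℝ≥0∞) (i j : S) : ℝ≥0∞ :=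
  if i = z ∨ j = z then 0 else q i j + q i z * μ j

/-- `μ(T) = Σ_{k ∈ C} μ(k) T_k`. -/
def muT (q : S → S → ℝ≥0∞) (s z : S) (μ : S → ℝ≥0∞) : ℝ≥0∞ :=
  ∑' k, μ k * excT q s z k

/-- `π` is a stationary distribution of the chain with rates `q`. -/
def IsStationaryRates (q : S → S → ℝ≥0∞) (π : S → ℝ≥0∞) : Prop :=
  (∑' k, π k = 1) ∧ ∀ j, ∑' i, π i * q i j = π j * totalRate q j

/-- Total variation distance between two distributions on `S`. -/
def dTV (π ν : S → ℝ≥0∞) : ℝ≥0∞ := (∑' k, ((π k - ν k) + (ν k - π k))) / 2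

end


noncomputable section
open Classical
open scoped ENNReal
open ENNReal
variable {S : Type*}

namespace Stmt0Aux

lemma tsum_sub' {ι : Type*} {f g : ι → ℝ≥0∞} (h₁ : ∑' i, g i ≠ ⊤) (h₂ : ∀ i, g i ≤ f i) :
    ∑' i, (f i - g i) = ∑' i, f i - ∑' i, g i :=
  ENNReal.eq_sub_of_add_eq h₁ (by
    rw [← ENNReal.tsum_add]
    exact tsum_congr fun i => tsub_add_cancel_of_le (h₂ i))

lemma tsum_iSup_mono {ι : Type*} {f : ι → ℕ → ℝ≥0∞} (hf : ∀ i, Monotone (f i)) :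
    ∑' i, ⨆ n, f i n = ⨆ n, ∑' i, f i n := by
  simp only [ENNReal.tsum_eq_iSup_sum]
  rw [iSup_comm]
  exact iSup_congr fun F => ENNReal.finsetSum_iSup_of_monotone hf

lemma sum_jumpP_eq (q : S → S → ℝ≥0∞) (j : S) :
    ∑' i, jumpP q j i = totalRate q j * (totalRate q j)⁻¹ := by
  simp only [jumpP, div_eq_mul_inv]
  rw [ENNReal.tsum_mul_right]; rfl

lemma sum_jumpP_le_one (q : S → S → ℝ≥0∞) (j : S) : ∑' i, jumpP q j i ≤ 1 := by
  rw [sum_jumpP_eq]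
  rcases eq_or_ne (totalRate q j) 0 with h | h
  · simp [h]
  rcases eq_or_ne (totalRate q j) ⊤ with h' | h'
  · simp [h']
  · rw [ENNReal.mul_inv_cancel h h']

lemma sum_jumpP_eq_one {q : S → S → ℝ≥0∞} {j : S} (h0 : totalRate q j ≠ 0)
    (ht : totalRate q j ≠ ⊤) : ∑' i, jumpP q j i = 1 := by
  rw [sum_jumpP_eq, ENNReal.mul_inv_cancel h0 ht]

lemma jumpP_le_one (q : S → S → ℝ≥0∞) (j i : S) : jumpP q j i ≤ 1 :=
  le_trans (ENNReal.le_tsum i) (sum_jumpP_le_one q j)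

lemma jumpP_ne_top (q : S → S → ℝ≥0∞) (j i : S) : jumpP q j i ≠ ⊤ :=
  ne_top_of_le_ne_top one_ne_top (jumpP_le_one q j i)

/-! ### least fixed points -/

def iter (op : (S → ℝ≥0∞) → (S → ℝ≥0∞)) : ℕ → S → ℝ≥0∞
  | 0 => fun _ => 0
  | n + 1 => op (iter op n)

def lfp (op : (S → ℝ≥0∞) → (S → ℝ≥0∞)) : S → ℝ≥0∞ := fun j => ⨆ n, iter op n j

variable {op : (S → ℝ≥0∞) → (S → ℝ≥0∞)}

lemma iter_succ_le (mono : Monotone op) : ∀ n, iter op n ≤ iter op (n + 1)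
  | 0 => fun _ => zero_le
  | n + 1 => mono (iter_succ_le mono n)

lemma iter_mono_n (mono : Monotone op) : Monotone (iter op) :=
  monotone_nat_of_le_succ (iter_succ_le mono)

lemma iter_le (mono : Monotone op) {T : S → ℝ≥0∞} (hT : op T ≤ T) : ∀ n, iter op n ≤ T
  | 0 => fun _ => zero_le
  | n + 1 => le_trans (mono (iter_le mono hT n)) hT

lemma lfp_le (mono : Monotone op) {T : S → ℝ≥0∞} (hT : op T ≤ T) : lfp op ≤ T :=
  fun j => iSup_le fun n => iter_le mono hT n j

lemma lfp_succ_eq (mono : Monotone op) (j : S) :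
    (⨆ n, iter op (n + 1) j) = lfp op j :=
  le_antisymm (iSup_le fun n => le_iSup (fun n => iter op n j) (n + 1))
    (iSup_le fun n => le_trans (iter_succ_le mono n j) (le_iSup (fun n => iter op (n+1) j) n))

end Stmt0Aux

namespace Stmt0Aux2
open Stmt0Aux

/-! ### the hitting-time operator -/

def hitOp (q : S → S → ℝ≥0∞) (A : Set S) (T : S → ℝ≥0∞) : S → ℝ≥0∞ :=
  fun j => if j ∈ A then 0 else (totalRate q j)⁻¹ + ∑' i, jumpP q j i * T i

lemma hitOp_mono (q : S → S → ℝ≥0∞) (A : Set S) : Monotone (hitOp q A) := by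
  intro T U h j
  simp only [hitOp]
  split_ifs with hj
  · exact le_rfl
  · exact add_le_add le_rfl (ENNReal.tsum_le_tsum fun i => mul_le_mul_right (h i) _)

lemma hitOp_lfp_fix (q : S → S → ℝ≥0∞) (A : Set S) :
    hitOp q A (lfp (hitOp q A)) = lfp (hitOp q A) := by
  funext j
  have cont : hitOp q A (lfp (hitOp q A)) j = ⨆ n, iter (hitOp q A) (n + 1) j := by
    have h2 : ∀ n, iter (hitOp q A) (n + 1) j = hitOp q A (iter (hitOp q A) n) j :=
      fun n => rfl
    simp only [h2, hitOp, lfp]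
    split_ifs with hj
    · simp
    · have h1 : ∀ i, jumpP q j i * (⨆ n, iter (hitOp q A) n i)
          = ⨆ n, jumpP q j i * iter (hitOp q A) n i :=
        fun i => ENNReal.mul_iSup _ _
      rw [tsum_congr h1,
        tsum_iSup_mono (f := fun i n => jumpP q j i * iter (hitOp q A) n i)
          (fun i => fun a b hab =>
          mul_le_mul_right (iter_mono_n (hitOp_mono q A) hab i) _),
        ENNReal.add_iSup]
  rw [cont, lfp_succ_eq (hitOp_mono q A)]

lemma lfp_hit_isSol (q : S → S → ℝ≥0∞) (A : Set S) :
    IsHitTimeSol q A (lfp (hitOp q A)) := by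
  constructor
  · intro a ha
    conv_lhs => rw [← hitOp_lfp_fix q A]
    simp only [hitOp, if_pos ha]
  · intro j hj
    conv_lhs => rw [← hitOp_lfp_fix q A]
    simp only [hitOp, if_neg hj]

lemma hitOp_fix_of_sol {q : S → S → ℝ≥0∞} {A : Set S} {T : S → ℝ≥0∞}
    (hT : IsHitTimeSol q A T) : hitOp q A T = T := by
  funext j
  simp only [hitOp]
  split_ifs with hj
  · exact (hT.1 j hj).symm
  · exact (hT.2 j hj).symm

lemma hitTime_eq (q : S → S → ℝ≥0∞) (A : Set S) :
    hitTime q A = lfp (hitOp q A) := by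
  funext k
  apply le_antisymm
  · exact iInf₂_le _ (lfp_hit_isSol q A)
  · exact le_iInf₂ fun T hT =>
      lfp_le (hitOp_mono q A) (le_of_eq (hitOp_fix_of_sol hT)) k

lemma hitTime_isSol (q : S → S → ℝ≥0∞) (A : Set S) :
    IsHitTimeSol q A (hitTime q A) := by
  rw [hitTime_eq]; exact lfp_hit_isSol q A

lemma hitTime_le_super {q : S → S → ℝ≥0∞} {A : Set S} {U : S → ℝ≥0∞}
    (hU : hitOp q A U ≤ U) : ∀ k, hitTime q A k ≤ U k := by
  rw [hitTime_eq]; exact lfp_le (hitOp_mono q A) hU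

/-! ### the hitting-probability operator -/

def befOp (q : S → S → ℝ≥0∞) (A B : Set S) (h : S → ℝ≥0∞) : S → ℝ≥0∞ :=
  fun j => if j ∈ A then 1 else if j ∈ B then 0 else ∑' i, jumpP q j i * h i

lemma befOp_mono (q : S → S → ℝ≥0∞) (A B : Set S) : Monotone (befOp q A B) := by
  intro T U h j
  simp only [befOp]
  split_ifs with hj hj'
  · exact le_rfl
  · exact le_rfl
  · exact ENNReal.tsum_le_tsum fun i => mul_le_mul_right (h i) _

lemma befOp_lfp_fix (q : S → S → ℝ≥0∞) (A B : Set S) :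
    befOp q A B (lfp (befOp q A B)) = lfp (befOp q A B) := by
  funext j
  have cont : befOp q A B (lfp (befOp q A B)) j = ⨆ n, iter (befOp q A B) (n + 1) j := by
    have h2 : ∀ n, iter (befOp q A B) (n + 1) j = befOp q A B (iter (befOp q A B) n) j :=
      fun n => rfl
    simp only [h2, befOp, lfp]
    split_ifs with hj hj'
    · simp
    · simp
    · have h1 : ∀ i, jumpP q j i * (⨆ n, iter (befOp q A B) n i)
          = ⨆ n, jumpP q j i * iter (befOp q A B) n i :=
        fun i => ENNReal.mul_iSup _ _
      rw [tsum_congr h1,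
        tsum_iSup_mono (f := fun i n => jumpP q j i * iter (befOp q A B) n i)
          (fun i => fun a b hab =>
          mul_le_mul_right (iter_mono_n (befOp_mono q A B) hab i) _)]
  rw [cont, lfp_succ_eq (befOp_mono q A B)]

lemma befOp_le_one {q : S → S → ℝ≥0∞} {A B : Set S} {h : S → ℝ≥0∞}
    (hh : ∀ j, h j ≤ 1) (j : S) : befOp q A B h j ≤ 1 := by
  simp only [befOp]
  split_ifs
  · exact le_rfl
  · exact zero_le
  · calc ∑' i, jumpP q j i * h i ≤ ∑' i, jumpP q j i := by
          exact ENNReal.tsum_le_tsum fun i => by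
            calc jumpP q j i * h i ≤ jumpP q j i * 1 := mul_le_mul_right (hh i) _
            _ = jumpP q j i := mul_one _
      _ ≤ 1 := sum_jumpP_le_one q j

lemma lfp_bef_le_one (q : S → S → ℝ≥0∞) (A B : Set S) (j : S) :
    lfp (befOp q A B) j ≤ 1 := by
  refine iSup_le fun n => ?_
  induction n generalizing j with
  | zero => exact zero_le
  | succ n ih => exact befOp_le_one (fun i => ih i) j

lemma lfp_bef_isSol (q : S → S → ℝ≥0∞) (A B : Set S) (hAB : ∀ b ∈ B, b ∉ A) :
    IsBeforeSol q A B (lfp (befOp q A B)) := by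
  refine ⟨?_, ?_, ?_, lfp_bef_le_one q A B⟩
  · intro a ha
    conv_lhs => rw [← befOp_lfp_fix q A B]
    simp only [befOp, if_pos ha]
  · intro b hb
    conv_lhs => rw [← befOp_lfp_fix q A B]
    simp only [befOp, if_neg (hAB b hb), if_pos hb]
  · intro j hjA hjB
    conv_lhs => rw [← befOp_lfp_fix q A B]
    simp only [befOp, if_neg hjA, if_neg hjB]

lemma befOp_fix_of_sol {q : S → S → ℝ≥0∞} {A B : Set S} {h : S → ℝ≥0∞}
    (hh : IsBeforeSol q A B h) : befOp q A B h = h := by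
  funext j
  simp only [befOp]
  split_ifs with hj hj'
  · exact (hh.1 j hj).symm
  · exact (hh.2.1 j hj').symm
  · exact (hh.2.2.1 j hj hj').symm

lemma probBefore_eq (q : S → S → ℝ≥0∞) (A B : Set S) (hAB : ∀ b ∈ B, b ∉ A) :
    probBefore q A B = lfp (befOp q A B) := by
  funext k
  apply le_antisymm
  · exact iInf₂_le _ (lfp_bef_isSol q A B hAB)
  · exact le_iInf₂ fun h hh =>
      lfp_le (befOp_mono q A B) (le_of_eq (befOp_fix_of_sol hh)) k

lemma probBefore_isSol (q : S → S → ℝ≥0∞) (A B : Set S) (hAB : ∀ b ∈ B, b ∉ A) :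
    IsBeforeSol q A B (probBefore q A B) := by
  rw [probBefore_eq q A B hAB]; exact lfp_bef_isSol q A B hAB

lemma probBefore_le_sol {q : S → S → ℝ≥0∞} {A B : Set S} {h : S → ℝ≥0∞}
    (hh : IsBeforeSol q A B h) (k : S) : probBefore q A B k ≤ h k :=
  iInf₂_le _ hh

end Stmt0Aux2
end
section MainProof
open Classical Stmt0Aux Stmt0Aux2
open scoped ENNReal
open ENNReal

private lemma tsum_jumpP_mul_le_one {S : Type*} {q : S → S → ℝ≥0∞} {j : S}
    {h : S → ℝ≥0∞} (hh : ∀ i, h i ≤ 1) : ∑' i, jumpP q j i * h i ≤ 1 := by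
  calc ∑' i, jumpP q j i * h i ≤ ∑' i, jumpP q j i :=
        ENNReal.tsum_le_tsum fun i => by
          calc jumpP q j i * h i ≤ jumpP q j i * 1 := mul_le_mul_right (hh i) _
          _ = jumpP q j i := mul_one _
  _ ≤ 1 := Stmt0Aux.sum_jumpP_le_one q j

/-- Lemma 2.2(i): under Condition B, `μ(T) ≤ E^μ[τ^μ_{s}] ≤ μ(T)/p`. -/
theorem stmt_0 {S : Type*} [Countable S] (q : S → S → ℝ≥0∞) (z s : S)
    (hsz : s ≠ z) (hq : ∀ k, totalRate q k ≠ ⊤) (hqz : totalRate q z = 0)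
    (hp : 0 < pInf q s z) (hT : ∀ k, k ≠ z → excT q s z k < ⊤)
    (μ : S → ℝ≥0∞) (hμz : μ z = 0) (hμ1 : ∑' k, μ k = 1) :
    muT q s z μ ≤ (∑' k, μ k * excT (retChain q z μ) s s k) ∧
      (∑' k, μ k * excT (retChain q z μ) s s k) ≤ muT q s z μ / pInf q s z := by
  classical
  have hpair : ({s, s} : Set S) = {s} := Set.pair_eq_singleton s
  have hsA2 : s ∈ ({s, z} : Set S) := by simp
  have hzA2 : z ∈ ({s, z} : Set S) := by simp
  have hnotA2 : ∀ k, k ≠ s → k ≠ z → k ∉ ({s, z} : Set S) := by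
    intro k h1 h2; simp [h1, h2]
  have hmuT : muT q s z μ = ∑' k, μ k * excT q s z k := rfl
  -- the base hitting time
  have hTsol : IsHitTimeSol q {s, z} (hitTime q {s, z}) := hitTime_isSol q {s, z}
  have hTs0 : hitTime q {s, z} s = 0 := hTsol.1 s hsA2
  have hTz0 : hitTime q {s, z} z = 0 := hTsol.1 z hzA2
  -- excT unfolds
  have hexc_s : excT q s z s = retTime q {s, z} s := by simp [excT]
  have hexc_k : ∀ k, k ≠ s → k ≠ z → excT q s z k = hitTime q {s, z} k := by
    intro k h1 h2; simp [excT, h1, h2]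
  -- positive rates on C
  have hrpos : ∀ k, k ≠ z → totalRate q k ≠ 0 := by
    intro k hk h0
    have hinv : (⊤ : ℝ≥0∞) ≤ (totalRate q k)⁻¹ := by simp [h0]
    have h2 := hT k hk
    rcases eq_or_ne k s with rfl | hks
    · rw [hexc_s] at h2
      have h3 : (⊤ : ℝ≥0∞) ≤ retTime q {k, z} k := by
        refine le_trans hinv ?_
        simp only [retTime]
        exact le_self_add
      exact absurd (lt_of_le_of_lt h3 h2) (lt_irrefl ⊤)
    · rw [hexc_k k hks hk, hTsol.2 k (hnotA2 k hks hk)] at h2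
      exact absurd (lt_of_le_of_lt (le_trans hinv le_self_add) h2) (lt_irrefl ⊤)
  -- the before-probabilities  g = probBefore q {s} {z},  f = probBefore q {z} {s}
  have hgsol : IsBeforeSol q {s} {z} (probBefore q {s} {z}) :=
    probBefore_isSol q {s} {z} (by
      intro b hb
      simp only [Set.mem_singleton_iff] at hb ⊢
      subst hb; exact Ne.symm hsz)
  have hfsol : IsBeforeSol q {z} {s} (probBefore q {z} {s}) :=
    probBefore_isSol q {z} {s} (by
      intro b hb
      simp only [Set.mem_singleton_iff] at hb ⊢
      subst hb; exact hsz)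
  have hgs1 : probBefore q {s} {z} s = 1 := hgsol.1 s rfl
  have hgz0 : probBefore q {s} {z} z = 0 := hgsol.2.1 z rfl
  have hfz1 : probBefore q {z} {s} z = 1 := hfsol.1 z rfl
  have hfs0 : probBefore q {z} {s} s = 0 := hfsol.2.1 s rfl
  have hgle1 : ∀ i, probBefore q {s} {z} i ≤ 1 := hgsol.2.2.2
  -- a subtraction identity
  have hsub : ∀ j, j ≠ z →
      ∑' i, jumpP q j i * (1 - probBefore q {s} {z} i)
        = 1 - ∑' i, jumpP q j i * probBefore q {s} {z} i := by
    intro j hj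
    have hns : ∑' i, jumpP q j i * probBefore q {s} {z} i ≤ 1 :=
      tsum_jumpP_mul_le_one hgle1
    have h1 : ∀ i, jumpP q j i * (1 - probBefore q {s} {z} i)
        = jumpP q j i - jumpP q j i * probBefore q {s} {z} i := by
      intro i
      rw [ENNReal.mul_sub (fun _ _ => jumpP_ne_top q j i), mul_one]
    rw [tsum_congr h1, tsum_sub' (ne_top_of_le_ne_top one_ne_top hns)
        (fun i => by
          calc jumpP q j i * probBefore q {s} {z} i ≤ jumpP q j i * 1 :=
                mul_le_mul_right (hgle1 i) _
          _ = jumpP q j i := mul_one _),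
      sum_jumpP_eq_one (hrpos j hj) (hq j)]
  -- 1 - g solves the (z,s) system, hence f ≤ 1 - g
  have hcomp : IsBeforeSol q {z} {s} (fun k => 1 - probBefore q {s} {z} k) := by
    refine ⟨?_, ?_, ?_, fun j => tsub_le_self⟩
    · intro b hb
      rw [Set.mem_singleton_iff] at hb
      show 1 - probBefore q {s} {z} b = 1
      rw [hb, hgz0]; simp
    · intro b hb
      rw [Set.mem_singleton_iff] at hb
      show 1 - probBefore q {s} {z} b = 0
      rw [hb, hgs1]; simp
    · intro j hjz hjs
      have hjz' : j ≠ z := by simpa using hjz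
      show 1 - probBefore q {s} {z} j = _
      rw [hsub j hjz', ← hgsol.2.2.1 j hjs hjz]
  have hfle : ∀ i, probBefore q {z} {s} i ≤ 1 - probBefore q {s} {z} i :=
    fun i => probBefore_le_sol hcomp i
  have hfg : ∀ i, probBefore q {z} {s} i + probBefore q {s} {z} i ≤ 1 := by
    intro i
    calc probBefore q {z} {s} i + probBefore q {s} {z} i
        ≤ (1 - probBefore q {s} {z} i) + probBefore q {s} {z} i :=
          add_le_add (hfle i) le_rfl
    _ = 1 := tsub_add_cancel_of_le (hgle1 i)
  -- facts about p
  have hple : ∀ k, k ≠ z → pInf q s z ≤ pHit q s z k := by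
    intro k hk
    exact iInf_le (fun k : {k : S // k ≠ z} => pHit q s z (k : S)) ⟨k, hk⟩
  have hpHit_k : ∀ k, k ≠ s → k ≠ z → pHit q s z k = probBefore q {s} {z} k := by
    intro k h1 h2; simp [pHit, h1, h2]
  have hpHit_s : pHit q s z s = ∑' i, jumpP q s i * probBefore q {s} {z} i := by
    simp [pHit]
  have hgp : ∀ k, k ≠ s → k ≠ z → pInf q s z ≤ probBefore q {s} {z} k :=
    fun k h1 h2 => (hpHit_k k h1 h2) ▸ hple k h2
  have hps : pInf q s z ≤ ∑' i, jumpP q s i * probBefore q {s} {z} i :=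
    hpHit_s ▸ hple s hsz
  have hsumg_le1 : ∑' i, jumpP q s i * probBefore q {s} {z} i ≤ 1 :=
    tsum_jumpP_mul_le_one hgle1
  have hp1 : pInf q s z ≤ 1 := le_trans hps hsumg_le1
  have hpne0 : pInf q s z ≠ 0 := hp.ne'
  have hpnetop : pInf q s z ≠ ⊤ := ne_top_of_le_ne_top one_ne_top hp1
  have hfp : ∀ k, k ≠ z → probBefore q {z} {s} k ≤ 1 - pInf q s z := by
    intro k hk
    rcases eq_or_ne k s with rfl | hks
    · rw [hfs0]; exact zero_le
    · refine (ENNReal.cancel_of_ne hpnetop).le_tsub_of_add_le_right ?_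
      calc probBefore q {z} {s} k + pInf q s z
          ≤ probBefore q {z} {s} k + probBefore q {s} {z} k :=
            add_le_add le_rfl (hgp k hks hk)
      _ ≤ 1 := hfg k
  have hfps : (∑' i, jumpP q s i * probBefore q {z} {s} i) ≤ 1 - pInf q s z := by
    refine (ENNReal.cancel_of_ne hpnetop).le_tsub_of_add_le_right ?_
    have h1 : ∑' i, jumpP q s i * probBefore q {z} {s} i
        ≤ ∑' i, jumpP q s i * (1 - probBefore q {s} {z} i) :=
      ENNReal.tsum_le_tsum fun i => mul_le_mul_right (hfle i) _
    calc (∑' i, jumpP q s i * probBefore q {z} {s} i) + pInf q s z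
        ≤ (1 - ∑' i, jumpP q s i * probBefore q {s} {z} i)
            + ∑' i, jumpP q s i * probBefore q {s} {z} i :=
          add_le_add (h1.trans (hsub s hsz).le) hps
    _ = 1 := tsub_add_cancel_of_le hsumg_le1
  -- facts about the returned chain
  have hq'iz : ∀ i, retChain q z μ i z = 0 := fun i => if_pos (Or.inr rfl)
  have hq'ij : ∀ i j, i ≠ z → j ≠ z → retChain q z μ i j = q i j + q i z * μ j := by
    intro i j h1 h2; simp only [retChain]; rw [if_neg (by tauto)]
  have hrr : ∀ j, j ≠ z → totalRate (retChain q z μ) j = totalRate q j := by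
    intro j hj
    have h1 : ∀ i, retChain q z μ j i = (if i = z then 0 else q j i) + q j z * μ i := by
      intro i
      rcases eq_or_ne i z with rfl | hi
      · rw [hq'iz]; simp [hμz]
      · rw [hq'ij j i hj hi, if_neg hi]
    calc totalRate (retChain q z μ) j
        = ∑' i, ((if i = z then 0 else q j i) + q j z * μ i) := tsum_congr h1
    _ = (∑' i, (if i = z then 0 else q j i)) + ∑' i, q j z * μ i := ENNReal.tsum_add
    _ = (∑' i, (if i = z then 0 else q j i)) + q j z := by
        rw [ENNReal.tsum_mul_left, hμ1, mul_one]
    _ = totalRate q j := by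
        rw [add_comm]
        exact (ENNReal.tsum_eq_add_tsum_ite z).symm
  have hjq : ∀ (j i : S), jumpP q j i = q j i * (totalRate q j)⁻¹ :=
    fun j i => div_eq_mul_inv _ _
  have hjq' : ∀ j, j ≠ z → ∀ i, jumpP (retChain q z μ) j i
      = retChain q z μ j i * (totalRate q j)⁻¹ := by
    intro j hj i
    rw [jumpP, hrr j hj, div_eq_mul_inv]
  have hjle : ∀ j i, j ≠ z → i ≠ z → jumpP q j i ≤ jumpP (retChain q z μ) j i := by
    intro j i h1 h2
    rw [hjq, hjq' j h1]
    exact mul_le_mul_left (by rw [hq'ij j i h1 h2]; exact le_self_add) _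
  -- the returned chain's hitting time of {s}
  have hHsol : IsHitTimeSol (retChain q z μ) {s} (hitTime (retChain q z μ) {s}) :=
    hitTime_isSol (retChain q z μ) {s}
  have hexc'_s : excT (retChain q z μ) s s s = retTime (retChain q z μ) {s} s := by
    simp [excT, hpair]
  have hexc'_k : ∀ k, k ≠ s →
      excT (retChain q z μ) s s k = hitTime (retChain q z μ) {s} k := by
    intro k hk; simp [excT, hpair, hk]
  -- comparison: base hitting time ≤ returned-chain hitting time (off {s,z})
  have hU0 : ∀ k, hitTime q {s, z} k
      ≤ if k ∈ ({s, z} : Set S) then 0 else hitTime (retChain q z μ) {s} k := by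
    intro k
    refine hitTime_le_super
      (U := fun k => if k ∈ ({s, z} : Set S) then 0
        else hitTime (retChain q z μ) {s} k) ?_ k
    intro j
    by_cases hj : j ∈ ({s, z} : Set S)
    · simp [hitOp, hj]
    · have hjs : j ≠ s := fun h => hj (by rw [h]; exact hsA2)
      have hjz : j ≠ z := fun h => hj (by rw [h]; exact hzA2)
      simp only [hitOp, if_neg hj]
      rw [hHsol.2 j (by simp [hjs]), hrr j hjz]
      refine add_le_add le_rfl (ENNReal.tsum_le_tsum fun i => ?_)
      by_cases hi : i ∈ ({s, z} : Set S)
      · rw [if_pos hi, mul_zero]; exact zero_le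
      · have hiz : i ≠ z := fun h => hi (by rw [h]; exact hzA2)
        rw [if_neg hi]
        exact mul_le_mul' (hjle j i hjz hiz) le_rfl
  constructor
  · -- lower bound
    show (∑' k, μ k * excT q s z k) ≤ _
    refine ENNReal.tsum_le_tsum fun k => ?_
    rcases eq_or_ne k z with rfl | hkz
    · simp [hμz]
    rcases eq_or_ne k s with rfl | hks
    · rw [hexc_s, hexc'_s]
      refine mul_le_mul_right ?_ _
      simp only [retTime]
      rw [hrr k hkz]
      refine add_le_add le_rfl (ENNReal.tsum_le_tsum fun i => ?_)
      by_cases hi : i ∈ ({k, z} : Set S)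
      · rw [hTsol.1 i hi, mul_zero]; exact zero_le
      · have hiz : i ≠ z := fun h => hi (by rw [h]; exact hzA2)
        have h5 := hU0 i
        rw [if_neg hi] at h5
        exact mul_le_mul' (hjle k i hkz hiz) h5
    · rw [hexc_k k hks hkz, hexc'_k k hks]
      refine mul_le_mul_right ?_ _
      have h5 := hU0 k
      rwa [if_neg (hnotA2 k hks hkz)] at h5
  · -- upper bound
    set B : ℝ≥0∞ := muT q s z μ / pInf q s z with hBdef
    have hpB : pInf q s z * B = muT q s z μ := by
      rw [hBdef]; exact ENNReal.mul_div_cancel hpne0 hpnetop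
    set W : S → ℝ≥0∞ :=
      fun i => hitTime q {s, z} i + probBefore q {z} {s} i * B with hWdef
    have hWi : ∀ i, W i = hitTime q {s, z} i + probBefore q {z} {s} i * B :=
      fun i => congrFun hWdef i
    have hWs : W s = 0 := by rw [hWi, hTs0, hfs0, zero_mul, add_zero]
    have hWz : W z = B := by rw [hWi, hTz0, hfz1, one_mul, zero_add]
    set U : S → ℝ≥0∞ := fun k => if k = s then 0 else if k = z then ⊤ else W k
      with hUdef
    have hUs : U s = 0 := by rw [congrFun hUdef s]; simp
    have hUz : U z = ⊤ := by rw [congrFun hUdef z]; simp [Ne.symm hsz]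
    have hUk : ∀ k, k ≠ s → k ≠ z → U k = W k := by
      intro k h1 h2; rw [congrFun hUdef k]; simp [h1, h2]
    -- μ-average of U is at most B
    have hmuU : ∑' i, μ i * U i ≤ B := by
      have h1 : ∀ i, μ i * U i ≤ μ i * (excT q s z i + (1 - pInf q s z) * B) := by
        intro i
        rcases eq_or_ne i z with rfl | hiz
        · simp [hμz]
        rcases eq_or_ne i s with rfl | his
        · rw [hUs, mul_zero]; exact zero_le
        · rw [hUk i his hiz]
          refine mul_le_mul_right ?_ _
          rw [hWi, hexc_k i his hiz]
          exact add_le_add le_rfl (mul_le_mul_left (hfp i hiz) _)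
      calc ∑' i, μ i * U i
          ≤ ∑' i, μ i * (excT q s z i + (1 - pInf q s z) * B) :=
            ENNReal.tsum_le_tsum h1
      _ = ∑' i, (μ i * excT q s z i + μ i * ((1 - pInf q s z) * B)) :=
            tsum_congr fun i => mul_add _ _ _
      _ = muT q s z μ + (∑' i, μ i) * ((1 - pInf q s z) * B) := by
            rw [ENNReal.tsum_add, ENNReal.tsum_mul_right, hmuT]
      _ = pInf q s z * B + (1 - pInf q s z) * B := by
            rw [hμ1, one_mul, ← hpB]
      _ = B := by rw [← add_mul, add_tsub_cancel_of_le hp1, one_mul]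
    -- key sum estimate
    have hkey : ∀ j, j ≠ z →
        ∑' i, jumpP (retChain q z μ) j i * U i ≤ ∑' i, jumpP q j i * W i := by
      intro j hjz
      have e1 : ∀ i, jumpP (retChain q z μ) j i * U i
          = retChain q z μ j i * U i * (totalRate q j)⁻¹ := by
        intro i; rw [hjq' j hjz i, mul_right_comm]
      have e2 : ∀ i, jumpP q j i * W i = q j i * W i * (totalRate q j)⁻¹ := by
        intro i; rw [hjq, mul_right_comm]
      rw [tsum_congr e1, tsum_congr e2, ENNReal.tsum_mul_right, ENNReal.tsum_mul_right]
      refine mul_le_mul_left ?_ _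
      have h3 : ∀ i, retChain q z μ j i * U i
          ≤ (if i = z then 0 else q j i * W i) + q j z * (μ i * U i) := by
        intro i
        rcases eq_or_ne i z with rfl | hiz
        · rw [hq'iz, zero_mul, if_pos rfl, hμz, zero_mul, mul_zero, add_zero]
        · rw [hq'ij j i hjz hiz, if_neg hiz]
          rcases eq_or_ne i s with rfl | his
          · rw [hUs, hWs]; simp
          · rw [hUk i his hiz, add_mul, mul_assoc]
      calc ∑' i, retChain q z μ j i * U i
          ≤ ∑' i, ((if i = z then 0 else q j i * W i) + q j z * (μ i * U i)) :=
            ENNReal.tsum_le_tsum h3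
      _ = (∑' i, if i = z then 0 else q j i * W i) + q j z * ∑' i, μ i * U i := by
            rw [ENNReal.tsum_add, ENNReal.tsum_mul_left]
      _ ≤ (∑' i, if i = z then 0 else q j i * W i) + q j z * B :=
            add_le_add le_rfl (mul_le_mul_right hmuU _)
      _ = ∑' i, q j i * W i := by
            conv_rhs => rw [ENNReal.tsum_eq_add_tsum_ite z]
            rw [hWz]
            exact add_comm _ _
    -- splitting the W-sum
    have hsplit : ∀ j, ∑' i, jumpP q j i * W i
        = (∑' i, jumpP q j i * hitTime q {s, z} i)
          + (∑' i, jumpP q j i * probBefore q {z} {s} i) * B := by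
      intro j
      have h4 : ∀ i, jumpP q j i * W i
          = jumpP q j i * hitTime q {s, z} i
            + jumpP q j i * probBefore q {z} {s} i * B := by
        intro i; rw [hWi, mul_add, ← mul_assoc]
      rw [tsum_congr h4, ENNReal.tsum_add, ENNReal.tsum_mul_right]
    -- U is a supersolution for the returned chain
    have hUsuper : hitOp (retChain q z μ) {s} U ≤ U := by
      intro j
      by_cases hjs : j = s
      · subst hjs
        simp only [hitOp]
        rw [if_pos (Set.mem_singleton j), hUs]
      · by_cases hjz : j = z
        · subst hjz
          rw [hUz]; exact le_top
        · simp only [hitOp]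
          rw [if_neg (by simp [hjs] : j ∉ ({s} : Set S)), hrr j hjz, hUk j hjs hjz]
          calc (totalRate q j)⁻¹ + ∑' i, jumpP (retChain q z μ) j i * U i
              ≤ (totalRate q j)⁻¹ + ∑' i, jumpP q j i * W i :=
                add_le_add le_rfl (hkey j hjz)
          _ = (totalRate q j)⁻¹ + ((∑' i, jumpP q j i * hitTime q {s, z} i)
                + (∑' i, jumpP q j i * probBefore q {z} {s} i) * B) := by
              rw [hsplit j]
          _ = W j := by
              rw [hWi, hTsol.2 j (hnotA2 j hjs hjz),
                hfsol.2.2.1 j (by simp [hjz]) (by simp [hjs]), ← add_assoc]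
    have hHU : ∀ k, hitTime (retChain q z μ) {s} k ≤ U k := hitTime_le_super hUsuper
    -- termwise final estimate
    have hterm : ∀ k, μ k * excT (retChain q z μ) s s k
        ≤ μ k * (excT q s z k + (1 - pInf q s z) * B) := by
      intro k
      rcases eq_or_ne k z with rfl | hkz
      · simp [hμz]
      rcases eq_or_ne k s with rfl | hks
      · rw [hexc'_s]
        refine mul_le_mul_right ?_ _
        rw [hexc_s]
        simp only [retTime]
        rw [hrr k hkz]
        calc (totalRate q k)⁻¹
              + ∑' i, jumpP (retChain q z μ) k i * hitTime (retChain q z μ) {k} i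
            ≤ (totalRate q k)⁻¹ + ∑' i, jumpP (retChain q z μ) k i * U i :=
              add_le_add le_rfl
                (ENNReal.tsum_le_tsum fun i => mul_le_mul_right (hHU i) _)
        _ ≤ (totalRate q k)⁻¹ + ∑' i, jumpP q k i * W i :=
              add_le_add le_rfl (hkey k hkz)
        _ = (totalRate q k)⁻¹ + ((∑' i, jumpP q k i * hitTime q {k, z} i)
              + (∑' i, jumpP q k i * probBefore q {z} {k} i) * B) := by
            rw [hsplit k]
        _ ≤ (totalRate q k)⁻¹ + ((∑' i, jumpP q k i * hitTime q {k, z} i)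
              + (1 - pInf q k z) * B) :=
            add_le_add le_rfl (add_le_add le_rfl (mul_le_mul_left hfps _))
        _ = ((totalRate q k)⁻¹ + ∑' i, jumpP q k i * hitTime q {k, z} i)
              + (1 - pInf q k z) * B := by rw [← add_assoc]
      · rw [hexc'_k k hks]
        refine mul_le_mul_right ?_ _
        calc hitTime (retChain q z μ) {s} k ≤ U k := hHU k
        _ = W k := hUk k hks hkz
        _ ≤ excT q s z k + (1 - pInf q s z) * B := by
            rw [hWi, hexc_k k hks hkz]
            exact add_le_add le_rfl (mul_le_mul_left (hfp k hkz) _)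
    calc ∑' k, μ k * excT (retChain q z μ) s s k
        ≤ ∑' k, μ k * (excT q s z k + (1 - pInf q s z) * B) :=
          ENNReal.tsum_le_tsum hterm
    _ = ∑' k, (μ k * excT q s z k + μ k * ((1 - pInf q s z) * B)) :=
          tsum_congr fun k => mul_add _ _ _
    _ = muT q s z μ + (∑' k, μ k) * ((1 - pInf q s z) * B) := by
          rw [ENNReal.tsum_add, ENNReal.tsum_mul_right, hmuT]
    _ = pInf q s z * B + (1 - pInf q s z) * B := by
          rw [hμ1, one_mul, ← hpB]
    _ = B := by rw [← add_mul, add_tsub_cancel_of_le hp1, one_mul]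
end MainProof
end

section
/- Under Condition B, for every k ∈ C, the expected hitting time of s by the returned process X^μ started at k satisfies E_k[τ^μ_{{s}}] ≤ T_k + (1 − p_k) μ(T)/p. -/
/- Framework: a continuous-time Markov chain on a countable state space is given by
its jump rates `q : S → S → ℝ≥0∞`.  Hitting probabilities, expected hitting times
and occupation times (Green functions) are defined as the minimal nonnegative
solutions of the classical first-step systems, realised as pointwise infima over
all solutions. -/

open scoped ENNReal
open ENNReal

noncomputable section AuxMine
open Classical
variable {S : Type*}

lemma tsum_jumpP_le_one (q : S → S → ℝ≥0∞) (j : S) : ∑' i, jumpP q j i ≤ 1 := by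
  unfold jumpP
  simp only [div_eq_mul_inv]
  rw [ENNReal.tsum_mul_right]
  exact ENNReal.mul_inv_le_one _

lemma tsum_jumpP_eq_one (q : S → S → ℝ≥0∞) (j : S) (h0 : totalRate q j ≠ 0)
    (ht : totalRate q j ≠ ⊤) : ∑' i, jumpP q j i = 1 := by
  unfold jumpP
  simp only [div_eq_mul_inv]
  rw [ENNReal.tsum_mul_right]
  exact ENNReal.mul_inv_cancel h0 ht

def hitOp (q : S → S → ℝ≥0∞) (A : Set S) : (S → ℝ≥0∞) →o (S → ℝ≥0∞) where
  toFun T j := if j ∈ A then 0 else (totalRate q j)⁻¹ + ∑' i, jumpP q j i * T i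
  monotone' := by
    intro T T' hTT' j
    dsimp only
    split
    · exact le_rfl
    · exact add_le_add le_rfl (ENNReal.tsum_le_tsum fun i => mul_le_mul_right (hTT' i) _)

lemma hitOp_fixed_of_sol {q : S → S → ℝ≥0∞} {A : Set S} {T : S → ℝ≥0∞}
    (hT : IsHitTimeSol q A T) : hitOp q A T = T := by
  funext j
  by_cases hj : j ∈ A
  · simp [hitOp, DFunLike.coe, hj, hT.1 j hj]
  · simp [hitOp, DFunLike.coe, hj, (hT.2 j hj).symm]

lemma hitTime_isSol (q : S → S → ℝ≥0∞) (A : Set S) : IsHitTimeSol q A (hitTime q A) := by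
  have hfix : (hitOp q A) ((hitOp q A).lfp) = (hitOp q A).lfp := OrderHom.map_lfp _
  have hsol : IsHitTimeSol q A ((hitOp q A).lfp) := by
    constructor
    · intro a ha
      rw [← congrFun hfix a]
      show (if a ∈ A then 0 else _) = _
      simp [ha]
    · intro j hj
      rw [← congrFun hfix j]
      show (if j ∈ A then 0 else _) = _
      simp [hj]
  have heq : hitTime q A = (hitOp q A).lfp := by
    funext k
    apply le_antisymm
    · exact iInf₂_le _ hsol
    · exact le_iInf₂ fun T hT => (OrderHom.lfp_le _ (le_of_eq (hitOp_fixed_of_sol hT))) k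
  rw [heq]; exact hsol

def beforeOp (q : S → S → ℝ≥0∞) (A B : Set S) : (S → ℝ≥0∞) →o (S → ℝ≥0∞) where
  toFun h j := if j ∈ A then 1 else if j ∈ B then 0 else ∑' i, jumpP q j i * h i
  monotone' := by
    intro h h' hh j
    dsimp only
    split
    · exact le_rfl
    split
    · exact le_rfl
    · exact ENNReal.tsum_le_tsum fun i => mul_le_mul_right (hh i) _

lemma beforeOp_fixed_of_sol {q : S → S → ℝ≥0∞} {A B : Set S} {h : S → ℝ≥0∞}
    (hh : IsBeforeSol q A B h) : beforeOp q A B h = h := by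
  funext j
  by_cases hjA : j ∈ A
  · simp [beforeOp, DFunLike.coe, hjA, hh.1 j hjA]
  · by_cases hjB : j ∈ B
    · simp [beforeOp, DFunLike.coe, hjA, hjB, hh.2.1 j hjB]
    · simp [beforeOp, DFunLike.coe, hjA, hjB, (hh.2.2.1 j hjA hjB).symm]

lemma probBefore_isSol (q : S → S → ℝ≥0∞) (A B : Set S) (hAB : ∀ x ∈ A, x ∉ B) :
    IsBeforeSol q A B (probBefore q A B) := by
  have hfix : (beforeOp q A B) ((beforeOp q A B).lfp) = (beforeOp q A B).lfp :=
    OrderHom.map_lfp _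
  have hle1 : (beforeOp q A B).lfp ≤ fun _ => 1 := by
    apply OrderHom.lfp_le
    intro j
    dsimp [beforeOp, DFunLike.coe]
    split
    · exact le_rfl
    split
    · exact zero_le_one
    · calc ∑' i, jumpP q j i * 1 ≤ ∑' i, jumpP q j i := by
              simp
          _ ≤ 1 := tsum_jumpP_le_one q j
  have hsol : IsBeforeSol q A B ((beforeOp q A B).lfp) := by
    refine ⟨fun a ha => ?_, fun b hb => ?_, fun j hjA hjB => ?_, fun j => hle1 j⟩
    · rw [← congrFun hfix a]
      show (if a ∈ A then 1 else _) = _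
      simp [ha]
    · rw [← congrFun hfix b]
      show (if b ∈ A then 1 else if b ∈ B then 0 else _) = _
      have hbA : b ∉ A := fun hA => hAB b hA hb
      simp [hb, hbA]
    · rw [← congrFun hfix j]
      show (if j ∈ A then 1 else if j ∈ B then 0 else _) = _
      simp [hjA, hjB]
  have heq : probBefore q A B = (beforeOp q A B).lfp := by
    funext k
    apply le_antisymm
    · exact iInf₂_le _ hsol
    · exact le_iInf₂ fun h hh => (OrderHom.lfp_le _ (le_of_eq (beforeOp_fixed_of_sol hh))) k
  rw [heq]; exact hsol

end AuxMine


/-- Lemma 2.2(ii): `E_k[τ^μ_{s}] ≤ T_k + (1 - p_k) μ(T)/p` for every `k ∈ C`. -/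
theorem stmt_1 {S : Type*} [Countable S] (q : S → S → ℝ≥0∞) (z s : S)
    (hsz : s ≠ z) (hq : ∀ k, totalRate q k ≠ ⊤) (hqz : totalRate q z = 0)
    (hp : 0 < pInf q s z) (hT : ∀ k, k ≠ z → excT q s z k < ⊤)
    (μ : S → ℝ≥0∞) (hμz : μ z = 0) (hμ1 : ∑' k, μ k = 1) :
    ∀ k, k ≠ z →
      excT (retChain q z μ) s s k ≤
        excT q s z k + (1 - pHit q s z k) * (muT q s z μ / pInf q s z) := by
  classical
  intro k hk
  obtain ⟨hg0, hgeq⟩ := hitTime_isSol q ({s, z} : Set S)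
  obtain ⟨hh1, hh0, hheq, hhle⟩ := probBefore_isSol q ({s} : Set S) ({z} : Set S)
    (by intro x hx; simp only [Set.mem_singleton_iff] at hx ⊢; rw [hx]; simpa using hsz)
  set g : S → ℝ≥0∞ := hitTime q ({s, z} : Set S) with hgdef
  set h : S → ℝ≥0∞ := probBefore q ({s} : Set S) ({z} : Set S) with hhdef
  have hgs : g s = 0 := hg0 s (by simp)
  have hgz : g z = 0 := hg0 z (by simp)
  have hhs : h s = 1 := hh1 s rfl
  have hhz : h z = 0 := hh0 z rfl
  set b := ∑' i, μ i * h i with hbdef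
  set a := ∑' i, μ i * g i with hadef
  set c := a / b with hcdef
  -- basic facts about b
  have hble : b ≤ 1 := by
    rw [hbdef]
    calc ∑' i, μ i * h i ≤ ∑' i, μ i :=
          ENNReal.tsum_le_tsum fun i => by
            calc μ i * h i ≤ μ i * 1 := mul_le_mul_right (hhle i) _
              _ = μ i := mul_one _
      _ = 1 := hμ1
  have hpHit_le_h : ∀ i, i ≠ z → pHit q s z i ≤ h i := by
    intro i hiz
    by_cases his : i = s
    · rw [his, hhs]
      simp only [pHit, if_pos (Or.inl (rfl : s = s))]
      calc ∑' j, jumpP q s j * probBefore q {s} {z} j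
          ≤ ∑' j, jumpP q s j := ENNReal.tsum_le_tsum fun j => by
            calc jumpP q s j * probBefore q {s} {z} j ≤ jumpP q s j * 1 :=
                  mul_le_mul_right (hhle j) _
              _ = jumpP q s j := mul_one _
        _ ≤ 1 := tsum_jumpP_le_one q s
    · simp only [pHit, his, hiz, or_self, if_false]
      exact le_rfl
  have hpinf_le : ∀ i, i ≠ z → pInf q s z ≤ h i := by
    intro i hiz
    refine le_trans ?_ (hpHit_le_h i hiz)
    unfold pInf
    exact iInf_le _ (⟨i, hiz⟩ : {k : S // k ≠ z})
  have hbp : pInf q s z ≤ b := by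
    have h1 : pInf q s z = ∑' i, μ i * pInf q s z := by
      rw [ENNReal.tsum_mul_right, hμ1, one_mul]
    rw [h1, hbdef]
    refine ENNReal.tsum_le_tsum fun i => ?_
    by_cases hiz : i = z
    · rw [hiz, hμz]; simp
    · exact mul_le_mul_right (hpinf_le i hiz) _
  have hb0 : b ≠ 0 := (lt_of_lt_of_le hp hbp).ne'
  have hbt : b ≠ ⊤ := (hble.trans_lt ENNReal.one_lt_top).ne
  -- the candidate solution
  set Th : S → ℝ≥0∞ := fun i => if i = z then ⊤ else g i + (1 - h i) * c with hThdef
  have hThz : Th z = ⊤ := by simp [hThdef]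
  have hThne : ∀ i, i ≠ z → Th i = g i + (1 - h i) * c := by
    intro i hiz; simp only [hThdef]; rw [if_neg hiz]
  have hThs : Th s = 0 := by
    rw [hThne s hsz, hgs, hhs, tsub_self, zero_mul, add_zero]
  -- ∑ μ Th = c
  set d := ∑' i, μ i * (1 - h i) with hddef
  have hdb : d + b = 1 := by
    rw [hddef, hbdef, ← ENNReal.tsum_add]
    calc ∑' i, (μ i * (1 - h i) + μ i * h i) = ∑' i, μ i :=
          tsum_congr fun i => by rw [← mul_add, tsub_add_cancel_of_le (hhle i), mul_one]
      _ = 1 := hμ1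
  have hcb : c * b = a := by rw [hcdef]; exact ENNReal.div_mul_cancel hb0 hbt
  have hmuTc : ∑' i, μ i * Th i = c := by
    have e1 : ∑' i, μ i * Th i
        = (∑' i, μ i * g i) + (∑' i, μ i * (1 - h i)) * c := by
      calc ∑' i, μ i * Th i
          = ∑' i, (μ i * g i + (μ i * (1 - h i)) * c) := by
            refine tsum_congr fun i => ?_
            by_cases hiz : i = z
            · rw [hiz, hμz]; simp
            · rw [hThne i hiz, mul_add, mul_assoc]
        _ = (∑' i, μ i * g i) + ∑' i, (μ i * (1 - h i)) * c := ENNReal.tsum_add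
        _ = (∑' i, μ i * g i) + (∑' i, μ i * (1 - h i)) * c := by
            rw [ENNReal.tsum_mul_right]
    rw [e1, ← hadef, ← hddef, ← hcb, mul_comm d c, ← mul_add, add_comm b d, hdb, mul_one]
  -- returned chain total rates
  have hR'z : totalRate (retChain q z μ) z = 0 := by
    have h1 : ∀ i, retChain q z μ z i = 0 := fun i => by simp [retChain]
    simp [totalRate, h1]
  have hqjz_ne_top : ∀ j, q j z ≠ ⊤ := fun j =>
    ne_top_of_le_ne_top (hq j) (ENNReal.le_tsum z)
  have hR' : ∀ j, j ≠ z → totalRate (retChain q z μ) j = totalRate q j := by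
    intro j hjz
    have e1 : ∑' i, (retChain q z μ j i + if i = z then q j z else 0)
        = totalRate (retChain q z μ) j + q j z := by
      rw [ENNReal.tsum_add, tsum_ite_eq]; rfl
    have e2 : ∑' i, (retChain q z μ j i + if i = z then q j z else 0)
        = ∑' i, (q j i + q j z * μ i) := by
      refine tsum_congr fun i => ?_
      by_cases hiz : i = z
      · rw [hiz]; simp [retChain, hμz]
      · simp [retChain, hjz, hiz]
    have e3 : ∑' i, (q j i + q j z * μ i) = totalRate q j + q j z := by
      rw [ENNReal.tsum_add, ENNReal.tsum_mul_left, hμ1, mul_one]; rfl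
    have key : totalRate (retChain q z μ) j + q j z = totalRate q j + q j z :=
      e1.symm.trans (e2.trans e3)
    rw [add_comm (totalRate (retChain q z μ) j), add_comm (totalRate q j)] at key
    exact (ENNReal.add_right_inj (hqjz_ne_top j)).mp key
  -- the key sum identity
  have hjump_sum : ∀ j, j ≠ z →
      ∑' i, jumpP (retChain q z μ) j i * Th i
        = ∑' i, jumpP q j i * (g i + (1 - h i) * c) := by
    intro j hjz
    have hTt : ∀ i, jumpP (retChain q z μ) j i * Th i
        = jumpP q j i * (if i = z then 0 else Th i)
          + (q j z / totalRate q j) * (μ i * Th i) := by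
      intro i
      by_cases hiz : i = z
      · rw [hiz]
        have h1 : jumpP (retChain q z μ) j z = 0 := by simp [jumpP, retChain]
        rw [h1, zero_mul, hμz, zero_mul, mul_zero, if_pos rfl, mul_zero, zero_add]
      · have hcond : ¬(j = z ∨ i = z) := by tauto
        simp only [jumpP, hR' j hjz, retChain, if_neg hcond, if_neg hiz, div_eq_mul_inv]
        ring
    have step1 : ∑' i, jumpP (retChain q z μ) j i * Th i
        = (∑' i, jumpP q j i * (if i = z then 0 else Th i))
          + (q j z / totalRate q j) * c := by
      rw [tsum_congr hTt, ENNReal.tsum_add, ENNReal.tsum_mul_left, hmuTc]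
    rw [step1]
    have step2 : ∑' i, jumpP q j i * (g i + (1 - h i) * c)
        = ∑' i, (jumpP q j i * (if i = z then 0 else Th i)
            + if i = z then (q j z / totalRate q j) * c else 0) := by
      refine tsum_congr fun i => ?_
      by_cases hiz : i = z
      · rw [hiz, hgz, hhz, if_pos rfl, if_pos rfl, mul_zero, zero_add, tsub_zero,
          one_mul, zero_add]
        rfl
      · rw [if_neg hiz, if_neg hiz, add_zero, hThne i hiz]
    rw [step2, ENNReal.tsum_add, tsum_ite_eq]
  -- splitting of the original-chain sum
  have hsplit : ∀ j, ∑' i, jumpP q j i * (g i + (1 - h i) * c)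
      = (∑' i, jumpP q j i * g i) + (∑' i, jumpP q j i * (1 - h i)) * c := by
    intro j
    calc ∑' i, jumpP q j i * (g i + (1 - h i) * c)
        = ∑' i, (jumpP q j i * g i + (jumpP q j i * (1 - h i)) * c) :=
          tsum_congr fun i => by rw [mul_add, mul_assoc]
      _ = (∑' i, jumpP q j i * g i) + ∑' i, (jumpP q j i * (1 - h i)) * c :=
          ENNReal.tsum_add
      _ = (∑' i, jumpP q j i * g i) + (∑' i, jumpP q j i * (1 - h i)) * c := by
          rw [ENNReal.tsum_mul_right]
  -- Th is a solution for the returned chain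
  have hThsol : IsHitTimeSol (retChain q z μ) {s} Th := by
    constructor
    · intro x hx
      simp only [Set.mem_singleton_iff] at hx
      rw [hx]; exact hThs
    · intro j hj
      have hjs : j ≠ s := by simpa using hj
      by_cases hjz : j = z
      · rw [hjz, hThz, hR'z]
        simp
      · rw [hR' j hjz, hjump_sum j hjz, hsplit j]
        have hgj : g j = (totalRate q j)⁻¹ + ∑' i, jumpP q j i * g i :=
          hgeq j (by simp [hjs, hjz])
        rw [hThne j hjz]
        by_cases hR0 : totalRate q j = 0
        · have hgtop : g j = ⊤ := by rw [hgj, hR0]; simp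
          rw [hgtop, hR0]
          simp
        · have hone : ∑' i, jumpP q j i = 1 := tsum_jumpP_eq_one q j hR0 (hq j)
          have hjh : ∑' i, jumpP q j i * h i = h j :=
            (hheq j (by simpa using hjs) (by simpa using hjz)).symm
          have hsub : ∑' i, jumpP q j i * (1 - h i) = 1 - h j := by
            have hadd : (∑' i, jumpP q j i * (1 - h i)) + h j = 1 := by
              rw [← hjh, ← ENNReal.tsum_add]
              calc ∑' i, (jumpP q j i * (1 - h i) + jumpP q j i * h i)
                  = ∑' i, jumpP q j i := tsum_congr fun i => by
                    rw [← mul_add, tsub_add_cancel_of_le (hhle i), mul_one]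
                _ = 1 := hone
            exact ENNReal.eq_sub_of_add_eq
              ((lt_of_le_of_lt (hhle j) ENNReal.one_lt_top).ne) hadd
          rw [hsub, hgj, add_assoc]
  have hhit_le : ∀ i, hitTime (retChain q z μ) {s} i ≤ Th i := by
    intro i
    exact iInf₂_le Th hThsol
  -- c ≤ C
  have haMuT : a ≤ muT q s z μ := by
    rw [hadef]
    unfold muT
    refine ENNReal.tsum_le_tsum fun i => ?_
    by_cases his : i = s
    · rw [his, hgs, mul_zero]; exact zero_le
    · by_cases hiz : i = z
      · rw [hiz, hgz, mul_zero]; exact zero_le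
      · have hcond : ¬(i = s ∨ i = z) := by tauto
        have he : excT q s z i = g i := by
          simp only [excT, if_neg hcond, hgdef]
        rw [he]
  have hC : c ≤ muT q s z μ / pInf q s z := by
    rw [hcdef]
    exact ENNReal.div_le_div haMuT hbp
  -- conclusion
  by_cases hks : k = s
  · rw [hks]
    have hss : s = s ∨ s = s := Or.inl rfl
    have hLHS : excT (retChain q z μ) s s s
        = (totalRate (retChain q z μ) s)⁻¹
          + ∑' i, jumpP (retChain q z μ) s i * hitTime (retChain q z μ) {s} i := by
      simp only [excT, eq_self_iff_true, true_or, if_true, retTime, Set.pair_eq_singleton]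
    have hRHS : excT q s z s = (totalRate q s)⁻¹ + ∑' i, jumpP q s i * g i := by
      simp only [excT, eq_self_iff_true, true_or, if_true, retTime, ← hgdef]
    have hpHitk : pHit q s z s = ∑' i, jumpP q s i * h i := by
      simp only [pHit, eq_self_iff_true, true_or, if_true, ← hhdef]
    have hjple : (∑' i, jumpP q s i * (1 - h i)) ≤ 1 - ∑' i, jumpP q s i * h i := by
      have hfin : (∑' i, jumpP q s i * h i) ≠ ⊤ := by
        refine (lt_of_le_of_lt (le_trans (ENNReal.tsum_le_tsum fun i => ?_)
          (tsum_jumpP_le_one q s)) ENNReal.one_lt_top).ne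
        calc jumpP q s i * h i ≤ jumpP q s i * 1 := mul_le_mul_right (hhle i) _
          _ = jumpP q s i := mul_one _
      refine ENNReal.le_sub_of_add_le_right hfin ?_
      rw [← ENNReal.tsum_add]
      calc ∑' i, (jumpP q s i * (1 - h i) + jumpP q s i * h i)
          = ∑' i, jumpP q s i := tsum_congr fun i => by
            rw [← mul_add, tsub_add_cancel_of_le (hhle i), mul_one]
        _ ≤ 1 := tsum_jumpP_le_one q s
    rw [hLHS, hRHS, hpHitk]
    calc (totalRate (retChain q z μ) s)⁻¹
          + ∑' i, jumpP (retChain q z μ) s i * hitTime (retChain q z μ) {s} i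
        ≤ (totalRate q s)⁻¹ + ∑' i, jumpP (retChain q z μ) s i * Th i := by
          rw [hR' s hsz]
          exact add_le_add le_rfl
            (ENNReal.tsum_le_tsum fun i => mul_le_mul_right (hhit_le i) _)
      _ = (totalRate q s)⁻¹
          + ((∑' i, jumpP q s i * g i) + (∑' i, jumpP q s i * (1 - h i)) * c) := by
          rw [hjump_sum s hsz, hsplit s]
      _ ≤ (totalRate q s)⁻¹ + ((∑' i, jumpP q s i * g i)
          + (1 - ∑' i, jumpP q s i * h i) * (muT q s z μ / pInf q s z)) :=
          add_le_add le_rfl (add_le_add le_rfl (mul_le_mul' hjple hC))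
      _ = (totalRate q s)⁻¹ + (∑' i, jumpP q s i * g i)
          + (1 - ∑' i, jumpP q s i * h i) * (muT q s z μ / pInf q s z) := by
          rw [add_assoc]
  · have hcond : ¬(k = s ∨ k = s) := by tauto
    have hcond2 : ¬(k = s ∨ k = z) := by tauto
    have hLHS : excT (retChain q z μ) s s k = hitTime (retChain q z μ) {s} k := by
      simp only [excT, if_neg hcond, Set.pair_eq_singleton]
    have hRHS : excT q s z k = g k := by
      simp only [excT, if_neg hcond2, ← hgdef]
    have hpHitk : pHit q s z k = h k := by
      simp only [pHit, if_neg hcond2, ← hhdef]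
    rw [hLHS, hRHS, hpHitk]
    calc hitTime (retChain q z μ) {s} k ≤ Th k := hhit_le k
      _ = g k + (1 - h k) * c := hThne k hk
      _ ≤ g k + (1 - h k) * (muT q s z μ / pInf q s z) :=
          add_le_add le_rfl (mul_le_mul_right hC _)
end

section
/- Under Condition B, let π^μ denote the stationary distribution of the returned process X^μ, and let C_ζ ⊆ C with s ∈ C_ζ satisfy Σ_{k∉C_ζ} T_{sk} ≤ ζ(1−p_s) T_s, where T_{sk} is the expected time spent in k before return to {s,0} starting from s and T_s = Σ_k T_{sk}. Then for every μ with μ(T) ≤ M T_s, one has π^μ(C \ C_ζ) ≤ (1−p_s)(ζ + M/p). -/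
/- Framework: a continuous-time Markov chain on a countable state space is given by
its jump rates `q : S → S → ℝ≥0∞`.  Hitting probabilities, expected hitting times
and occupation times (Green functions) are defined as the minimal nonnegative
solutions of the classical first-step systems, realised as pointwise infima over
all solutions. -/

open scoped ENNReal
open ENNReal

noncomputable section
namespace S3
open Classical
variable {S : Type*}

-- ===== generic infrastructure (already checked) =====
/-- pairing of a "measure" `m` with a "function" `f`. -/
def pr (m f : S → ℝ≥0∞) : ℝ≥0∞ := ∑' j, m j * f j

/-- kernel applied to a function. -/
def Kap (K : S → S → ℝ≥0∞) (f : S → ℝ≥0∞) : S → ℝ≥0∞ := fun j => ∑' l, K j l * f l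

/-- measure applied to a kernel. -/
def Map (m : S → ℝ≥0∞) (K : S → S → ℝ≥0∞) : S → ℝ≥0∞ := fun l => ∑' j, m j * K j l

lemma pr_mono {m f g : S → ℝ≥0∞} (h : ∀ i, f i ≤ g i) : pr m f ≤ pr m g :=
  ENNReal.tsum_le_tsum fun i => mul_le_mul_right (h i) _

lemma pr_mono_left {m n f : S → ℝ≥0∞} (h : ∀ i, m i ≤ n i) : pr m f ≤ pr n f :=
  ENNReal.tsum_le_tsum fun i => mul_le_mul_left (h i) _

lemma Kap_mono {K : S → S → ℝ≥0∞} {f g : S → ℝ≥0∞} (h : ∀ i, f i ≤ g i) (j : S) :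
    Kap K f j ≤ Kap K g j :=
  ENNReal.tsum_le_tsum fun i => mul_le_mul_right (h i) _

lemma Map_mono {m n : S → ℝ≥0∞} {K : S → S → ℝ≥0∞} (h : ∀ i, m i ≤ n i) (l : S) :
    Map m K l ≤ Map n K l :=
  ENNReal.tsum_le_tsum fun i => mul_le_mul_left (h i) _

lemma pr_add (m f g : S → ℝ≥0∞) :
    pr m (fun i => f i + g i) = pr m f + pr m g := by
  simp only [pr, mul_add]; exact ENNReal.tsum_add

lemma Kap_add (K : S → S → ℝ≥0∞) (f g : S → ℝ≥0∞) (j : S) :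
    Kap K (fun l => f l + g l) j = Kap K f j + Kap K g j := by
  simp only [Kap, mul_add]; exact ENNReal.tsum_add

lemma Map_add (m n : S → ℝ≥0∞) (K : S → S → ℝ≥0∞) (l : S) :
    Map (fun j => m j + n j) K l = Map m K l + Map n K l := by
  simp only [Map, add_mul]; exact ENNReal.tsum_add

lemma Map_smul (c : ℝ≥0∞) (m : S → ℝ≥0∞) (K : S → S → ℝ≥0∞) (l : S) :
    Map (fun j => c * m j) K l = c * Map m K l := by
  simp only [Map, mul_assoc]; exact ENNReal.tsum_mul_left

lemma Kap_smul (c : ℝ≥0∞) (K : S → S → ℝ≥0∞) (f : S → ℝ≥0∞) (j : S) :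
    Kap K (fun l => c * f l) j = c * Kap K f j := by
  simp only [Kap]
  rw [← ENNReal.tsum_mul_left]
  exact tsum_congr fun l => by ring

lemma Kap_zero (K : S → S → ℝ≥0∞) (j : S) : Kap K (fun _ => 0) j = 0 := by
  simp [Kap]

lemma slide (m : S → ℝ≥0∞) (K : S → S → ℝ≥0∞) (f : S → ℝ≥0∞) :
    pr (Map m K) f = pr m (Kap K f) := by
  simp only [pr, Map, Kap]
  calc ∑' l, (∑' j, m j * K j l) * f l
      = ∑' l, ∑' j, m j * K j l * f l := by
        exact tsum_congr fun l => ENNReal.tsum_mul_right.symm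
    _ = ∑' j, ∑' l, m j * K j l * f l := ENNReal.tsum_comm
    _ = ∑' j, m j * ∑' l, K j l * f l := by
        refine tsum_congr fun j => ?_
        rw [← ENNReal.tsum_mul_left]
        exact tsum_congr fun l => by ring

/-- monotone convergence for tsum against a weight on the left. -/
lemma mct {g : S → ℝ≥0∞} {f : ℕ → S → ℝ≥0∞} (hf : ∀ i, Monotone fun n => f n i) :
    ∑' i, g i * ⨆ n, f n i = ⨆ n, ∑' i, g i * f n i := by
  have h1 : ∀ i, g i * ⨆ n, f n i = ⨆ n, g i * f n i := fun i => ENNReal.mul_iSup _ _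
  simp only [h1]
  rw [ENNReal.tsum_eq_iSup_sum]
  have h2 : ∀ (s : Finset S), ∑ i ∈ s, ⨆ n, g i * f n i = ⨆ n, ∑ i ∈ s, g i * f n i := by
    intro s
    exact ENNReal.finsetSum_iSup_of_monotone fun i a b hab =>
      mul_le_mul_right (hf i hab) _
  simp only [h2]
  rw [iSup_comm]
  exact iSup_congr fun n => ENNReal.tsum_eq_iSup_sum.symm

lemma mct' {g : S → ℝ≥0∞} {f : ℕ → S → ℝ≥0∞} (hf : ∀ i, Monotone fun n => f n i) :
    ∑' i, (⨆ n, f n i) * g i = ⨆ n, ∑' i, f n i * g i := by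
  have e1 : ∑' i, (⨆ n, f n i) * g i = ∑' i, g i * ⨆ n, f n i :=
    tsum_congr fun i => mul_comm _ _
  rw [e1, mct hf]
  exact iSup_congr fun n => tsum_congr fun i => mul_comm _ _

lemma tsum_sub' {f g : S → ℝ≥0∞} (hg : ∑' i, g i ≠ ∞) (h : ∀ i, g i ≤ f i) :
    ∑' i, (f i - g i) = ∑' i, f i - ∑' i, g i := by
  have : ∀ i, f i = (f i - g i) + g i := fun i => (tsub_add_cancel_of_le (h i)).symm
  have hsum : ∑' i, f i = ∑' i, (f i - g i) + ∑' i, g i := by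
    conv_lhs => rw [tsum_congr this]
    exact ENNReal.tsum_add
  exact ENNReal.eq_sub_of_add_eq hg hsum.symm


-- ===== chain-specific objects =====
variable (q : S → S → ℝ≥0∞) (s z : S)

/-- jump kernel killed at `{s, z}`. -/
def Qh (j l : S) : ℝ≥0∞ := if l = s ∨ l = z then 0 else jumpP q j l

/-- splitting a sum at the two points `s` and `z`. -/
lemma split3 (hsz : s ≠ z) (f : S → ℝ≥0∞) :
    ∑' i, f i = f s + f z + ∑' l, (if l = s ∨ l = z then 0 else f l) := by
  rw [ENNReal.tsum_eq_add_tsum_ite s]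
  rw [ENNReal.tsum_eq_add_tsum_ite z]
  have h2 : ∀ x : S, (if x = z then (0:ℝ≥0∞) else if x = s then 0 else f x)
      = if x = s ∨ x = z then 0 else f x := by
    intro x
    by_cases hxz : x = z
    · simp [hxz]
    · by_cases hxs : x = s <;> simp [hxz, hxs]
  rw [if_neg (Ne.symm hsz), tsum_congr h2, ← add_assoc]

lemma sumJ (j : S) : ∑' i, jumpP q j i = totalRate q j / totalRate q j := by
  simp only [jumpP, div_eq_mul_inv]
  rw [ENNReal.tsum_mul_right]; rfl

lemma sumJ_le_one {j : S} (hq : totalRate q j ≠ ∞) : ∑' i, jumpP q j i ≤ 1 := by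
  rw [sumJ]
  rcases eq_or_ne (totalRate q j) 0 with h | h
  · simp [h]
  · rw [ENNReal.div_self h hq]

lemma sumJ_eq_one {j : S} (h0 : totalRate q j ≠ 0) (hq : totalRate q j ≠ ∞) :
    ∑' i, jumpP q j i = 1 := by
  rw [sumJ, ENNReal.div_self h0 hq]

end S3

namespace S3
variable {S : Type*} (q : S → S → ℝ≥0∞) (s z : S)
open Classical

/-- iterates towards the minimal solution of `f = c + Q̂ f`. -/
def vit (c : S → ℝ≥0∞) : ℕ → S → ℝ≥0∞
  | 0 => fun _ => 0
  | n + 1 => fun j => c j + Kap (Qh q s z) (vit c n) j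

/-- minimal solution of `f = c + Q̂ f`. -/
def msol (c : S → ℝ≥0∞) : S → ℝ≥0∞ := fun j => ⨆ n, vit q s z c n j

lemma vit_mono (c : S → ℝ≥0∞) (j : S) : Monotone fun n => vit q s z c n j := by
  have key : ∀ n, ∀ j, vit q s z c n j ≤ vit q s z c (n + 1) j := by
    intro n
    induction n with
    | zero => intro j; simp [vit]
    | succ m ih =>
      intro j
      simp only [vit]
      exact add_le_add_right (Kap_mono ih j) _
  exact monotone_nat_of_le_succ fun n => key n j

lemma le_msol (c : S → ℝ≥0∞) (n : ℕ) (j : S) : vit q s z c n j ≤ msol q s z c j :=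
  le_iSup (fun n => vit q s z c n j) n

lemma msol_fixed (c : S → ℝ≥0∞) (j : S) :
    msol q s z c j = c j + Kap (Qh q s z) (msol q s z c) j := by
  have h1 : msol q s z c j = ⨆ n, vit q s z c (n + 1) j := by
    apply le_antisymm
    · exact iSup_le fun n => le_trans (vit_mono q s z c j (Nat.le_succ n))
        (le_iSup (fun n => vit q s z c (n + 1) j) n)
    · exact iSup_le fun n => le_iSup (fun n => vit q s z c n j) (n + 1)
  have h2 : Kap (Qh q s z) (msol q s z c) j = ⨆ n, Kap (Qh q s z) (vit q s z c n) j :=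
    mct fun i => vit_mono q s z c i
  rw [h1, h2]
  calc ⨆ n, vit q s z c (n + 1) j
      = ⨆ n, (c j + Kap (Qh q s z) (vit q s z c n) j) := iSup_congr fun n => rfl
    _ = c j + ⨆ n, Kap (Qh q s z) (vit q s z c n) j := (ENNReal.add_iSup _).symm

lemma vit_mono_c {c c' : S → ℝ≥0∞} (h : ∀ l, c l ≤ c' l) (n : ℕ) (j : S) :
    vit q s z c n j ≤ vit q s z c' n j := by
  induction n generalizing j with
  | zero => simp [vit]
  | succ m ih => exact add_le_add (h j) (Kap_mono ih j)

lemma msol_mono {c c' : S → ℝ≥0∞} (h : ∀ l, c l ≤ c' l) (j : S) :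
    msol q s z c j ≤ msol q s z c' j :=
  iSup_le fun n => le_trans (vit_mono_c q s z h n j) (le_msol q s z c' n j)

lemma vit_add (c c' : S → ℝ≥0∞) (n : ℕ) (j : S) :
    vit q s z (fun l => c l + c' l) n j = vit q s z c n j + vit q s z c' n j := by
  induction n generalizing j with
  | zero => simp [vit]
  | succ m ih =>
    simp only [vit]
    have : Kap (Qh q s z) (vit q s z (fun l => c l + c' l) m) j
        = Kap (Qh q s z) (fun l => vit q s z c m l + vit q s z c' m l) j := by
      unfold Kap; exact tsum_congr fun l => by rw [ih]
    rw [this, Kap_add]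
    ring

lemma msol_add (c c' : S → ℝ≥0∞) (j : S) :
    msol q s z (fun l => c l + c' l) j = msol q s z c j + msol q s z c' j := by
  unfold msol
  rw [ENNReal.iSup_add_iSup_of_monotone (vit_mono q s z c j) (vit_mono q s z c' j)]
  exact iSup_congr fun n => vit_add q s z c c' n j

/-- the sup of monotone iterates commutes with `Kap`. -/
lemma Kap_msol (K : S → S → ℝ≥0∞) (c : S → ℝ≥0∞) (j : S) :
    Kap K (msol q s z c) j = ⨆ n, Kap K (vit q s z c n) j := by
  unfold Kap msol
  exact mct fun i => vit_mono q s z c i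

/-- `vit` commutes with `Kap (Qh)`. -/
lemma vit_Kap_comm (c : S → ℝ≥0∞) (n : ℕ) (j : S) :
    vit q s z (Kap (Qh q s z) c) n j = Kap (Qh q s z) (vit q s z c n) j := by
  induction n generalizing j with
  | zero => simp [vit, Kap]
  | succ m ih =>
    calc vit q s z (Kap (Qh q s z) c) (m + 1) j
        = Kap (Qh q s z) c j + Kap (Qh q s z) (vit q s z (Kap (Qh q s z) c) m) j := rfl
      _ = Kap (Qh q s z) c j
          + Kap (Qh q s z) (fun l => Kap (Qh q s z) (vit q s z c m) l) j := by
          congr 1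
          unfold Kap
          exact tsum_congr fun l => congrArg (fun x => Qh q s z j l * x) (ih l)
      _ = Kap (Qh q s z) (fun l => c l + Kap (Qh q s z) (vit q s z c m) l) j :=
          (Kap_add _ _ _ j).symm
      _ = Kap (Qh q s z) (vit q s z c (m + 1)) j := rfl

lemma vit_succ_eq (c : S → ℝ≥0∞) (n : ℕ) (j : S) :
    vit q s z c (n + 1) j = c j + vit q s z (Kap (Qh q s z) c) n j := by
  simp only [vit]; rw [vit_Kap_comm]

end S3

namespace S3
variable {S : Type*} (q : S → S → ℝ≥0∞) (s z : S)
open Classical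

def aF : S → ℝ≥0∞ := fun j => jumpP q j s
def dF : S → ℝ≥0∞ := fun j => jumpP q j z
def cw : S → ℝ≥0∞ := fun l => if l = s ∨ l = z then 0 else (totalRate q l)⁻¹
def cset (A : Set S) : S → ℝ≥0∞ :=
  fun l => if l ∈ A ∧ ¬(l = s ∨ l = z) then (totalRate q l)⁻¹ else 0
def cind (i : S) : S → ℝ≥0∞ :=
  fun l => if l = i ∧ ¬(l = s ∨ l = z) then (totalRate q l)⁻¹ else 0
def PB : S → ℝ≥0∞ := fun k => if k = s then 1 else if k = z then 0 else msol q s z (aF q s) k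
def HT : S → ℝ≥0∞ := fun k => if k = s ∨ k = z then 0 else msol q s z (cw q s z) k
def GR (i : S) : S → ℝ≥0∞ :=
  fun k => if k = s ∨ k = z then 0 else msol q s z (cind q s z i) k

/-- the basic row-sum splitting. -/
lemma rowsplit (hsz : s ≠ z) (j : S) :
    ∑' i, jumpP q j i = aF q s j + dF q z j + ∑' l, Qh q s z j l :=
  split3 s z hsz fun i => jumpP q j i

lemma Kap_one_le (hsz : s ≠ z) (hq : ∀ k, totalRate q k ≠ ∞) (j : S) :
    aF q s j + dF q z j + Kap (Qh q s z) (fun _ => 1) j ≤ 1 := by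
  have h1 : Kap (Qh q s z) (fun _ => 1) j = ∑' l, Qh q s z j l := by
    unfold Kap; exact tsum_congr fun l => mul_one _
  rw [h1, ← rowsplit q s z hsz j]
  exact sumJ_le_one q (hq j)

lemma vit_ad_le_one (hsz : s ≠ z) (hq : ∀ k, totalRate q k ≠ ∞) (n : ℕ) (j : S) :
    vit q s z (fun l => aF q s l + dF q z l) n j ≤ 1 := by
  induction n generalizing j with
  | zero => simp [vit]
  | succ m ih =>
    have h2 : Kap (Qh q s z) (vit q s z (fun l => aF q s l + dF q z l) m) j
        ≤ Kap (Qh q s z) (fun _ => 1) j := Kap_mono ih j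
    calc vit q s z (fun l => aF q s l + dF q z l) (m + 1) j
        = (aF q s j + dF q z j)
          + Kap (Qh q s z) (vit q s z (fun l => aF q s l + dF q z l) m) j := rfl
      _ ≤ (aF q s j + dF q z j) + Kap (Qh q s z) (fun _ => 1) j := add_le_add_right h2 _
      _ ≤ 1 := Kap_one_le q s z hsz hq j

lemma msol_ad_le_one (hsz : s ≠ z) (hq : ∀ k, totalRate q k ≠ ∞) (j : S) :
    msol q s z (aF q s) j + msol q s z (dF q z) j ≤ 1 := by
  rw [← msol_add]
  exact iSup_le fun n => vit_ad_le_one q s z hsz hq n j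

lemma msol_a_le_one (hsz : s ≠ z) (hq : ∀ k, totalRate q k ≠ ∞) (j : S) :
    msol q s z (aF q s) j ≤ 1 :=
  le_trans (le_add_right le_rfl) (msol_ad_le_one q s z hsz hq j)

/-- `PB` is a solution of the before-system. -/
lemma PB_isSol (hsz : s ≠ z) (hq : ∀ k, totalRate q k ≠ ∞) :
    IsBeforeSol q {s} {z} (PB q s z) := by
  have hzs : ¬(z = s) := Ne.symm hsz
  refine ⟨?_, ?_, ?_, ?_⟩
  · intro a ha; rw [Set.mem_singleton_iff] at ha; simp [PB, ha]
  · intro b hb; rw [Set.mem_singleton_iff] at hb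
    simp [PB, hb, hzs]
  · intro j hjs hjz
    rw [Set.mem_singleton_iff] at hjs hjz
    have hPBj : PB q s z j = msol q s z (aF q s) j := by simp [PB, hjs, hjz]
    rw [hPBj, split3 s z hsz fun i => jumpP q j i * PB q s z i]
    have h1 : PB q s z s = 1 := by simp [PB]
    have h2 : PB q s z z = 0 := by simp [PB, hzs]
    have h3 : ∀ l, (if l = s ∨ l = z then 0 else jumpP q j l * PB q s z l)
        = Qh q s z j l * msol q s z (aF q s) l := by
      intro l
      by_cases hl : l = s ∨ l = z
      · simp [Qh, hl]
      · push_neg at hl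
        simp [Qh, hl.1, hl.2, PB]
    rw [h1, h2, tsum_congr h3]
    simp only [mul_one, mul_zero, add_zero]
    exact msol_fixed q s z (aF q s) j
  · intro j
    by_cases hjs : j = s
    · simp [PB, hjs]
    by_cases hjz : j = z
    · simp [PB, hjs, hjz, hzs]
    · simp only [PB, if_neg hjs, if_neg hjz]
      exact msol_a_le_one q s z hsz hq j

lemma PB_min (hsz : s ≠ z) (h : S → ℝ≥0∞) (hsol : IsBeforeSol q {s} {z} h) (k : S) :
    PB q s z k ≤ h k := by
  have hzs : ¬(z = s) := Ne.symm hsz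
  have hs1 : h s = 1 := hsol.1 s rfl
  have hz0 : h z = 0 := hsol.2.1 z rfl
  have key : ∀ n l, ¬(l = s ∨ l = z) → vit q s z (aF q s) n l ≤ h l := by
    intro n
    induction n with
    | zero => intro l _; simp [vit]
    | succ m ih =>
      intro l hl
      push_neg at hl
      have harm := hsol.2.2.1 l (by simpa using hl.1) (by simpa using hl.2)
      calc vit q s z (aF q s) (m + 1) l
          = aF q s l + Kap (Qh q s z) (vit q s z (aF q s) m) l := rfl
        _ ≤ aF q s l + ∑' i, (if i = s ∨ i = z then 0 else jumpP q l i * h i) := by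
            refine add_le_add_right (ENNReal.tsum_le_tsum fun i => ?_) _
            by_cases hi : i = s ∨ i = z
            · simp [Qh, hi]
            · simp only [Qh, if_neg hi]
              exact mul_le_mul_right (ih i hi) _
        _ ≤ h l := by
            rw [harm, split3 s z hsz fun i => jumpP q l i * h i, hs1, hz0]
            simp only [mul_one, mul_zero, add_zero]
            exact le_of_eq rfl
  by_cases hks : k = s
  · simp [PB, hks, hs1]
  by_cases hkz : k = z
  · simp [PB, hks, hkz, hz0, hzs]
  · simp only [PB, if_neg hks, if_neg hkz]
    exact iSup_le fun n => key n k (by tauto)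

lemma probBefore_eq (hsz : s ≠ z) (hq : ∀ k, totalRate q k ≠ ∞) (k : S) :
    probBefore q {s} {z} k = PB q s z k := by
  apply le_antisymm
  · exact iInf₂_le (PB q s z) (PB_isSol q s z hsz hq)
  · exact le_iInf₂ fun h hsol => PB_min q s z hsz h hsol k

end S3

namespace S3
variable {S : Type*} (q : S → S → ℝ≥0∞) (s z : S)
open Classical

lemma mem_pair_iff (j : S) : j ∈ ({s, z} : Set S) ↔ (j = s ∨ j = z) := by
  simp [Set.mem_insert_iff, Set.mem_singleton_iff]

lemma HT_isSol (hsz : s ≠ z) : IsHitTimeSol q {s, z} (HT q s z) := by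
  constructor
  · intro a ha
    rw [mem_pair_iff] at ha
    simp [HT, ha]
  · intro j hj
    rw [mem_pair_iff] at hj
    have hHTj : HT q s z j = msol q s z (cw q s z) j := by simp [HT, hj]
    push_neg at hj
    rw [hHTj, split3 s z hsz fun i => jumpP q j i * HT q s z i]
    have h1 : HT q s z s = 0 := by simp [HT]
    have h2 : HT q s z z = 0 := by simp [HT]
    have h3 : ∀ l, (if l = s ∨ l = z then 0 else jumpP q j l * HT q s z l)
        = Qh q s z j l * msol q s z (cw q s z) l := by
      intro l
      by_cases hl : l = s ∨ l = z
      · simp [Qh, hl]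
      · simp [Qh, hl, HT]
    rw [h1, h2, tsum_congr h3]
    simp only [mul_zero, add_zero, zero_add]
    have h4 : cw q s z j = (totalRate q j)⁻¹ := by
      simp [cw, hj.1, hj.2]
    calc msol q s z (cw q s z) j
        = cw q s z j + Kap (Qh q s z) (msol q s z (cw q s z)) j := msol_fixed q s z _ j
      _ = (totalRate q j)⁻¹ + Kap (Qh q s z) (msol q s z (cw q s z)) j := by rw [h4]

lemma HT_min (T : S → ℝ≥0∞) (hsol : IsHitTimeSol q {s, z} T) (k : S) :
    HT q s z k ≤ T k := by
  have key : ∀ n l, ¬(l = s ∨ l = z) → vit q s z (cw q s z) n l ≤ T l := by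
    intro n
    induction n with
    | zero => intro l _; simp [vit]
    | succ m ih =>
      intro l hl
      have harm := hsol.2 l (by rw [mem_pair_iff]; exact hl)
      push_neg at hl
      calc vit q s z (cw q s z) (m + 1) l
          = cw q s z l + Kap (Qh q s z) (vit q s z (cw q s z) m) l := rfl
        _ ≤ (totalRate q l)⁻¹ + ∑' i, jumpP q l i * T i := by
            refine add_le_add (by simp [cw, hl.1, hl.2]) (ENNReal.tsum_le_tsum fun i => ?_)
            by_cases hi : i = s ∨ i = z
            · simp [Qh, hi]
            · simp only [Qh, if_neg hi]
              exact mul_le_mul_right (ih i hi) _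
        _ = T l := harm.symm
  by_cases hk : k = s ∨ k = z
  · simp [HT, hk]
  · simp only [HT, if_neg hk]
    exact iSup_le fun n => key n k hk

lemma hitTime_eq (hsz : s ≠ z) (k : S) : hitTime q {s, z} k = HT q s z k := by
  apply le_antisymm
  · exact iInf₂_le (HT q s z) (HT_isSol q s z hsz)
  · exact le_iInf₂ fun T hsol => HT_min q s z T hsol k

lemma GR_isSol (hsz : s ≠ z) (i : S) : IsGreenSol q {s, z} i (GR q s z i) := by
  constructor
  · intro a ha
    rw [mem_pair_iff] at ha
    simp [GR, ha]
  · intro j hj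
    rw [mem_pair_iff] at hj
    have hGRj : GR q s z i j = msol q s z (cind q s z i) j := by simp [GR, hj]
    rw [hGRj, split3 s z hsz fun l => jumpP q j l * GR q s z i l]
    have h1 : GR q s z i s = 0 := by simp [GR]
    have h2 : GR q s z i z = 0 := by simp [GR]
    have h3 : ∀ l, (if l = s ∨ l = z then 0 else jumpP q j l * GR q s z i l)
        = Qh q s z j l * msol q s z (cind q s z i) l := by
      intro l
      by_cases hl : l = s ∨ l = z
      · simp [Qh, hl]
      · simp [Qh, hl, GR]
    rw [h1, h2, tsum_congr h3]
    simp only [mul_zero, add_zero, zero_add]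
    have h4 : cind q s z i j = if j = i then (totalRate q j)⁻¹ else 0 := by
      simp only [cind, hj, not_false_iff, and_true]
    calc msol q s z (cind q s z i) j
        = cind q s z i j + Kap (Qh q s z) (msol q s z (cind q s z i)) j := msol_fixed q s z _ j
      _ = (if j = i then (totalRate q j)⁻¹ else 0)
          + Kap (Qh q s z) (msol q s z (cind q s z i)) j := by rw [h4]

lemma GR_min (i : S) (G : S → ℝ≥0∞) (hsol : IsGreenSol q {s, z} i G) (k : S) :
    GR q s z i k ≤ G k := by
  have key : ∀ n l, ¬(l = s ∨ l = z) → vit q s z (cind q s z i) n l ≤ G l := by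
    intro n
    induction n with
    | zero => intro l _; simp [vit]
    | succ m ih =>
      intro l hl
      have harm := hsol.2 l (by rw [mem_pair_iff]; exact hl)
      calc vit q s z (cind q s z i) (m + 1) l
          = cind q s z i l + Kap (Qh q s z) (vit q s z (cind q s z i) m) l := rfl
        _ ≤ (if l = i then (totalRate q l)⁻¹ else 0) + ∑' j, jumpP q l j * G j := by
            refine add_le_add (le_of_eq (by simp only [cind, hl, not_false_iff, and_true]))
              (ENNReal.tsum_le_tsum fun j => ?_)
            by_cases hj : j = s ∨ j = z
            · simp [Qh, hj]
            · simp only [Qh, if_neg hj]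
              exact mul_le_mul_right (ih j hj) _
        _ = G l := harm.symm
  by_cases hk : k = s ∨ k = z
  · simp [GR, hk]
  · simp only [GR, if_neg hk]
    exact iSup_le fun n => key n k hk

lemma green_eq (hsz : s ≠ z) (i k : S) : green q {s, z} i k = GR q s z i k := by
  apply le_antisymm
  · exact iInf₂_le (GR q s z i) (GR_isSol q s z hsz i)
  · exact le_iInf₂ fun G hsol => GR_min q s z i G hsol k

end S3

namespace S3
variable {S : Type*} (q : S → S → ℝ≥0∞) (s z : S)
open Classical

def ind (A : Set S) : S → ℝ≥0∞ := fun k => if k ∈ A then 1 else 0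

lemma vit_cind_sum (A : Set S) (n : ℕ) (j : S) :
    ∑' k, ind A k * vit q s z (cind q s z k) n j = vit q s z (cset q s z A) n j := by
  induction n generalizing j with
  | zero => simp [vit]
  | succ m ih =>
    have expand : ∀ k, ind A k * vit q s z (cind q s z k) (m + 1) j
        = ind A k * cind q s z k j
          + ind A k * Kap (Qh q s z) (vit q s z (cind q s z k) m) j := by
      intro k
      have : vit q s z (cind q s z k) (m + 1) j
          = cind q s z k j + Kap (Qh q s z) (vit q s z (cind q s z k) m) j := rfl
      rw [this, mul_add]
    rw [tsum_congr expand, ENNReal.tsum_add]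
    have h1 : ∑' k, ind A k * cind q s z k j = cset q s z A j := by
      rw [tsum_eq_single j]
      · by_cases hj : j ∈ A
        · by_cases hj2 : j = s ∨ j = z <;> simp [ind, cind, cset, hj, hj2]
        · simp [ind, cind, cset, hj]
      · intro k hk
        have : cind q s z k j = 0 :=
          if_neg fun h => hk h.1.symm
        rw [this, mul_zero]
    have h2 : ∑' k, ind A k * Kap (Qh q s z) (vit q s z (cind q s z k) m) j
        = Kap (Qh q s z) (vit q s z (cset q s z A) m) j := by
      calc ∑' k, ind A k * Kap (Qh q s z) (vit q s z (cind q s z k) m) j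
          = ∑' k, ∑' l, Qh q s z j l * (ind A k * vit q s z (cind q s z k) m l) := by
            refine tsum_congr fun k => ?_
            unfold Kap
            rw [← ENNReal.tsum_mul_left]
            exact tsum_congr fun l => by ring
        _ = ∑' l, ∑' k, Qh q s z j l * (ind A k * vit q s z (cind q s z k) m l) :=
            ENNReal.tsum_comm
        _ = ∑' l, Qh q s z j l * vit q s z (cset q s z A) m l := by
            refine tsum_congr fun l => ?_
            rw [ENNReal.tsum_mul_left, ih l]
        _ = Kap (Qh q s z) (vit q s z (cset q s z A) m) j := rfl
    rw [h1, h2]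
    rfl

lemma msol_cind_sum (A : Set S) (j : S) :
    ∑' k, ind A k * msol q s z (cind q s z k) j = msol q s z (cset q s z A) j := by
  have h1 : ∀ k, ind A k * msol q s z (cind q s z k) j
      = ind A k * ⨆ n, vit q s z (cind q s z k) n j := fun k => rfl
  rw [tsum_congr h1, mct fun k => vit_mono q s z (cind q s z k) j]
  exact iSup_congr fun n => vit_cind_sum q s z A n j

lemma green_sum (hsz : s ≠ z) (A : Set S) (j : S) :
    ∑' k, ind A k * green q {s, z} k j
      = if j = s ∨ j = z then 0 else msol q s z (cset q s z A) j := by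
  have h1 : ∀ k, ind A k * green q {s, z} k j = ind A k * GR q s z k j := by
    intro k; rw [green_eq q s z hsz]
  rw [tsum_congr h1]
  by_cases hj : j = s ∨ j = z
  · simp [GR, hj]
  · have h2 : ∀ k, ind A k * GR q s z k j = ind A k * msol q s z (cind q s z k) j := by
      intro k; simp [GR, hj]
    rw [tsum_congr h2, if_neg hj]
    exact msol_cind_sum q s z A j

lemma occT_sum (hsz : s ≠ z) (A : Set S) :
    ∑' k, ind A k * occT q s z k
      = ind A s * (totalRate q s)⁻¹ + msol q s z (cset q s z A) s := by
  have expand : ∀ k, ind A k * occT q s z k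
      = ind A k * (if k = s then (totalRate q s)⁻¹ else 0)
        + ind A k * ∑' j, jumpP q s j * green q {s, z} k j := by
    intro k
    rw [occT, mul_add]
  rw [tsum_congr expand, ENNReal.tsum_add]
  congr 1
  · rw [tsum_eq_single s]
    · simp
    · intro k hk; simp [hk]
  · calc ∑' k, ind A k * ∑' j, jumpP q s j * green q {s, z} k j
        = ∑' k, ∑' j, jumpP q s j * (ind A k * green q {s, z} k j) := by
          refine tsum_congr fun k => ?_
          rw [← ENNReal.tsum_mul_left]
          exact tsum_congr fun j => by ring
      _ = ∑' j, ∑' k, jumpP q s j * (ind A k * green q {s, z} k j) := ENNReal.tsum_comm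
      _ = ∑' j, jumpP q s j * (if j = s ∨ j = z then 0 else msol q s z (cset q s z A) j) := by
          refine tsum_congr fun j => ?_
          rw [ENNReal.tsum_mul_left, green_sum q s z hsz A j]
      _ = Kap (Qh q s z) (msol q s z (cset q s z A)) s := by
          refine tsum_congr fun j => ?_
          by_cases hj : j = s ∨ j = z
          · simp [Qh, hj]
          · simp [Qh, hj]
      _ = msol q s z (cset q s z A) s := by
          have h0 : cset q s z A s = 0 := by simp [cset]
          have := msol_fixed q s z (cset q s z A) s
          rw [h0, zero_add] at this
          exact this.symm

lemma cset_compl_le_cw (A : Set S) (l : S) : cset q s z A l ≤ cw q s z l := by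
  by_cases hl : l = s ∨ l = z <;> by_cases hA : l ∈ A <;> simp [cset, cw, hl, hA]

lemma cset_univ_eq_cw (l : S) : cset q s z Set.univ l = cw q s z l := by
  by_cases hl : l = s ∨ l = z <;> simp [cset, cw, hl]

/-- total occupation-time sum. -/
lemma occT_total (hsz : s ≠ z) :
    ∑' k, occT q s z k = (totalRate q s)⁻¹ + msol q s z (cw q s z) s := by
  have h1 : ∀ k, occT q s z k = ind (Set.univ) k * occT q s z k := by
    intro k; simp [ind]
  rw [tsum_congr h1, occT_sum q s z hsz Set.univ]
  have h2 : msol q s z (cset q s z Set.univ) s = msol q s z (cw q s z) s := by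
    have : cset q s z (Set.univ : Set S) = cw q s z := funext fun l => cset_univ_eq_cw q s z l
    rw [this]
  rw [h2]
  simp [ind]

end S3

namespace S3
variable {S : Type*} (q : S → S → ℝ≥0∞) (s z : S) (μ : S → ℝ≥0∞)
open Classical

/-- returned-chain jump kernel. -/
def PK : S → S → ℝ≥0∞ := fun j l => retChain q z μ j l * (totalRate q j)⁻¹
/-- returned-chain jump kernel, killed at `s`. -/
def bK : S → S → ℝ≥0∞ := fun j l => if l = s then 0 else PK q z μ j l
def aH : S → ℝ≥0∞ := fun j => PK q z μ j s
def muh : S → ℝ≥0∞ := fun l => if l = s ∨ l = z then 0 else μ l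
def eP : S → ℝ≥0∞ := fun l => if l = z then 0 else 1

lemma qz_zero (hqz : totalRate q z = 0) (l : S) : q z l = 0 := by
  have := (ENNReal.tsum_eq_zero.mp hqz) l
  exact this

lemma retChain_total (hqz : totalRate q z = 0) (hq : ∀ k, totalRate q k ≠ ∞)
    (hμz : μ z = 0) (hμ1 : ∑' k, μ k = 1) {j : S} (hj : j ≠ z) :
    totalRate (retChain q z μ) j = totalRate q j := by
  have h1 : ∀ l, retChain q z μ j l
      = (if l = z then 0 else q j l) + (if l = z then 0 else q j z * μ l) := by
    intro l
    by_cases hl : l = z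
    · simp [retChain, hl]
    · simp [retChain, hl, hj]
  have h2 : totalRate (retChain q z μ) j
      = (∑' l, if l = z then 0 else q j l) + ∑' l, (if l = z then 0 else q j z * μ l) := by
    rw [totalRate, tsum_congr h1]; exact ENNReal.tsum_add
  have h3 : ∑' l, (if l = z then 0 else q j z * μ l) = q j z := by
    have e1 : ∀ l, (if l = z then 0 else q j z * μ l) = q j z * (if l = z then 0 else μ l) := by
      intro l; by_cases hl : l = z <;> simp [hl]
    rw [tsum_congr e1, ENNReal.tsum_mul_left]
    have e2 : ∑' l, (if l = z then 0 else μ l) = 1 := by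
      have := ENNReal.tsum_eq_add_tsum_ite (f := μ) z
      rw [hμ1, hμz, zero_add] at this
      exact this.symm
    rw [e2, mul_one]
  have h4 : totalRate q j = q j z + ∑' l, (if l = z then 0 else q j l) := by
    rw [totalRate]
    exact ENNReal.tsum_eq_add_tsum_ite z
  rw [h2, h3, h4, add_comm]

lemma bK_decomp (hqz : totalRate q z = 0) :
    ∀ j l, bK q s z μ j l = Qh q s z j l + dF q z j * muh s z μ l := by
  intro j l
  by_cases hls : l = s
  · simp [bK, Qh, muh, hls]
  by_cases hlz : l = z
  · simp [bK, PK, Qh, muh, retChain, hls, hlz]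
  by_cases hjz : j = z
  · have hz1 : q z l = 0 := qz_zero q z hqz l
    have hz2 : q z z = 0 := qz_zero q z hqz z
    simp [bK, PK, Qh, muh, dF, retChain, jumpP, hls, hlz, hjz, hz1, hz2]
  · simp only [bK, PK, Qh, muh, dF, retChain, jumpP, if_neg hls, if_neg hlz,
      if_neg (not_or_intro hls hlz), if_neg (fun h : j = z ∨ l = z => by tauto)]
    rw [div_eq_mul_inv, div_eq_mul_inv, add_mul]
    ring

lemma Map_bK_decomp (hqz : totalRate q z = 0) (m : S → ℝ≥0∞) (l : S) :
    Map m (bK q s z μ) l = Map m (Qh q s z) l + pr m (dF q z) * muh s z μ l := by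
  have h1 : ∀ j, m j * bK q s z μ j l
      = m j * Qh q s z j l + m j * dF q z j * muh s z μ l := by
    intro j
    rw [bK_decomp q s z μ hqz j l, mul_add, mul_assoc]
  unfold Map
  rw [tsum_congr h1, ENNReal.tsum_add]
  congr 1
  rw [ENNReal.tsum_mul_right]
  rfl

/-- the stationary "flow measure". -/
def nu (π : S → ℝ≥0∞) : S → ℝ≥0∞ := fun l => π l * totalRate q l

lemma nu_stat (π : S → ℝ≥0∞) (hqz : totalRate q z = 0) (hq : ∀ k, totalRate q k ≠ ∞)
    (hR0 : ∀ j, j ≠ z → totalRate q j ≠ 0)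
    (hμz : μ z = 0) (hμ1 : ∑' k, μ k = 1)
    (hπ : IsStationaryRates (retChain q z μ) π) (l : S) :
    Map (nu q π) (PK q z μ) l = nu q π l := by
  have hterm : ∀ i, π i * retChain q z μ i l = nu q π i * PK q z μ i l := by
    intro i
    by_cases hiz : i = z
    · simp [retChain, hiz, PK, nu]
    · unfold nu PK
      rw [mul_comm (retChain q z μ i l) ((totalRate q i)⁻¹), ← mul_assoc, mul_assoc (π i),
        ENNReal.mul_inv_cancel (hR0 i hiz) (hq i), mul_one]
  by_cases hlz : l = z
  · have h1 : ∀ i, nu q π i * PK q z μ i l = 0 := by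
      intro i; simp [PK, retChain, hlz]
    have h2 : nu q π l = 0 := by
      simp [nu, hlz, hqz]
    unfold Map
    rw [tsum_congr h1, h2, tsum_zero]
  · have := hπ.2 l
    rw [retChain_total q z μ hqz hq hμz hμ1 hlz] at this
    unfold Map
    rw [← tsum_congr hterm]
    exact this

lemma nu_ne_top (π : S → ℝ≥0∞) (hq : ∀ k, totalRate q k ≠ ∞) (hπ1 : ∑' k, π k = 1) (l : S) :
    nu q π l ≠ ∞ := by
  have hπle : π l ≤ 1 := by
    rw [← hπ1]; exact ENNReal.le_tsum l
  exact ENNReal.mul_ne_top (ne_top_of_le_ne_top ENNReal.one_ne_top hπle) (hq l)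

lemma rowsum_P (hq : ∀ k, totalRate q k ≠ ∞) (hqz : totalRate q z = 0)
    (hR0 : ∀ j, j ≠ z → totalRate q j ≠ 0)
    (hμz : μ z = 0) (hμ1 : ∑' k, μ k = 1) {j : S} (hj : j ≠ z) :
    ∑' l, PK q z μ j l = 1 := by
  unfold PK
  rw [ENNReal.tsum_mul_right]
  have : ∑' l, retChain q z μ j l = totalRate q j :=
    retChain_total q z μ hqz hq hμz hμ1 hj
  rw [this, ENNReal.mul_inv_cancel (hR0 j hj) (hq j)]

lemma aH_rowsum (hsz : s ≠ z) (hq : ∀ k, totalRate q k ≠ ∞) (hqz : totalRate q z = 0)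
    (hR0 : ∀ j, j ≠ z → totalRate q j ≠ 0)
    (hμz : μ z = 0) (hμ1 : ∑' k, μ k = 1) {j : S} (hj : j ≠ z) :
    aH q s z μ j + Kap (bK q s z μ) (eP z) j = 1 := by
  have h1 : Kap (bK q s z μ) (eP z) j
      = ∑' l, (if l = s ∨ l = z then 0 else PK q z μ j l) := by
    unfold Kap
    refine tsum_congr fun l => ?_
    by_cases hls : l = s
    · simp [bK, eP, hls, hsz]
    by_cases hlz : l = z
    · simp [bK, eP, hls, hlz]
    · simp [bK, eP, hls, hlz]
  have h2 := split3 s z hsz fun l => PK q z μ j l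
  have h3 : PK q z μ j z = 0 := by simp [PK, retChain]
  rw [rowsum_P q z μ hq hqz hR0 hμz hμ1 hj, h3, add_zero] at h2
  rw [h1]
  exact h2.symm

lemma aH_le_one (hsz : s ≠ z) (hq : ∀ k, totalRate q k ≠ ∞) (hqz : totalRate q z = 0)
    (hR0 : ∀ j, j ≠ z → totalRate q j ≠ 0) (hμz : μ z = 0) (hμ1 : ∑' k, μ k = 1) (j : S) :
    aH q s z μ j ≤ 1 := by
  by_cases hj : j = z
  · rw [hj]
    simp [aH, PK, retChain]
  · rw [← aH_rowsum q s z μ hsz hq hqz hR0 hμz hμ1 hj]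
    exact le_add_right le_rfl

lemma aH_z (hqz : totalRate q z = 0) : aH q s z μ z = 0 := by
  simp [aH, PK, retChain]

lemma bK_z (l : S) : bK q s z μ z l = 0 := by
  by_cases hls : l = s <;> simp [bK, PK, retChain, hls]

end S3

namespace S3
variable {S : Type*} (q : S → S → ℝ≥0∞) (s z : S) (μ : S → ℝ≥0∞)
open Classical

/-- hitting-probability-of-`s` iterates for the returned chain. -/
def Hit : ℕ → S → ℝ≥0∞
  | 0 => fun _ => 0
  | N + 1 => fun j => aH q s z μ j + Kap (bK q s z μ) (Hit N) j

def Hinf : S → ℝ≥0∞ := fun j => ⨆ N, Hit q s z μ N j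

/-- iterated application of the killed kernel to a function. -/
def Phw (f : S → ℝ≥0∞) : ℕ → S → ℝ≥0∞
  | 0 => f
  | N + 1 => fun j => Kap (bK q s z μ) (Phw f N) j

lemma Hit_mono (j : S) : Monotone fun N => Hit q s z μ N j := by
  have key : ∀ N, ∀ j, Hit q s z μ N j ≤ Hit q s z μ (N + 1) j := by
    intro N
    induction N with
    | zero => intro j; simp [Hit]
    | succ m ih => intro j; exact add_le_add_right (Kap_mono ih j) _
  exact monotone_nat_of_le_succ fun n => key n j

lemma Hit_fixed (j : S) :
    Hinf q s z μ j = aH q s z μ j + Kap (bK q s z μ) (Hinf q s z μ) j := by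
  have h1 : Hinf q s z μ j = ⨆ n, Hit q s z μ (n + 1) j := by
    apply le_antisymm
    · exact iSup_le fun n => le_trans (Hit_mono q s z μ j (Nat.le_succ n))
        (le_iSup (fun n => Hit q s z μ (n + 1) j) n)
    · exact iSup_le fun n => le_iSup (fun n => Hit q s z μ n j) (n + 1)
  have h2 : Kap (bK q s z μ) (Hinf q s z μ) j = ⨆ n, Kap (bK q s z μ) (Hit q s z μ n) j :=
    mct fun i => Hit_mono q s z μ i
  rw [h1, h2]
  calc ⨆ n, Hit q s z μ (n + 1) j
      = ⨆ n, (aH q s z μ j + Kap (bK q s z μ) (Hit q s z μ n) j) := iSup_congr fun n => rfl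
    _ = aH q s z μ j + ⨆ n, Kap (bK q s z μ) (Hit q s z μ n) j := (ENNReal.add_iSup _).symm

lemma Hit_le_eP (hsz : s ≠ z) (hq : ∀ k, totalRate q k ≠ ∞) (hqz : totalRate q z = 0)
    (hR0 : ∀ j, j ≠ z → totalRate q j ≠ 0) (hμz : μ z = 0) (hμ1 : ∑' k, μ k = 1) :
    ∀ N j, Hit q s z μ N j ≤ eP z j := by
  intro N
  induction N with
  | zero => intro j; simp [Hit]
  | succ m ih =>
    intro j
    by_cases hj : j = z
    · have h2 : Hit q s z μ (m + 1) j
          = aH q s z μ j + Kap (bK q s z μ) (Hit q s z μ m) j := rfl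
      have h1 : Kap (bK q s z μ) (Hit q s z μ m) j = 0 := by
        unfold Kap
        have hz0 : ∀ l, bK q s z μ j l * Hit q s z μ m l = 0 := by
          intro l; rw [hj, bK_z q s z μ l, zero_mul]
        rw [tsum_congr hz0, tsum_zero]
      have h3 : aH q s z μ j = 0 := by rw [hj]; exact aH_z q s z μ hqz
      rw [h2, h1, h3, add_zero]
      exact zero_le
    · calc Hit q s z μ (m + 1) j
          = aH q s z μ j + Kap (bK q s z μ) (Hit q s z μ m) j := rfl
        _ ≤ aH q s z μ j + Kap (bK q s z μ) (eP z) j := add_le_add_right (Kap_mono ih j) _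
        _ = 1 := aH_rowsum q s z μ hsz hq hqz hR0 hμz hμ1 hj
        _ = eP z j := by simp [eP, hj]

lemma Phw_Kap_comm (f : S → ℝ≥0∞) (N : ℕ) (j : S) :
    Phw q s z μ (Kap (bK q s z μ) f) N j = Kap (bK q s z μ) (Phw q s z μ f N) j := by
  induction N generalizing j with
  | zero => rfl
  | succ m ih =>
    calc Phw q s z μ (Kap (bK q s z μ) f) (m + 1) j
        = Kap (bK q s z μ) (Phw q s z μ (Kap (bK q s z μ) f) m) j := rfl
      _ = Kap (bK q s z μ) (fun l => Kap (bK q s z μ) (Phw q s z μ f m) l) j := by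
          unfold Kap
          exact tsum_congr fun l => congrArg (fun x => bK q s z μ j l * x) (ih l)
      _ = Kap (bK q s z μ) (Phw q s z μ f (m + 1)) j := rfl

lemma Phw_add (f g : S → ℝ≥0∞) (N : ℕ) (j : S) :
    Phw q s z μ (fun l => f l + g l) N j = Phw q s z μ f N j + Phw q s z μ g N j := by
  induction N generalizing j with
  | zero => rfl
  | succ m ih =>
    calc Phw q s z μ (fun l => f l + g l) (m + 1) j
        = Kap (bK q s z μ) (Phw q s z μ (fun l => f l + g l) m) j := rfl
      _ = Kap (bK q s z μ) (fun l => Phw q s z μ f m l + Phw q s z μ g m l) j := by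
          unfold Kap
          exact tsum_congr fun l => congrArg (fun x => bK q s z μ j l * x) (ih l)
      _ = Phw q s z μ f (m + 1) j + Phw q s z μ g (m + 1) j := Kap_add _ _ _ j

lemma Phw_mono {f g : S → ℝ≥0∞} (h : ∀ l, f l ≤ g l) (N : ℕ) (j : S) :
    Phw q s z μ f N j ≤ Phw q s z μ g N j := by
  induction N generalizing j with
  | zero => exact h j
  | succ m ih => exact Kap_mono ih j

lemma Phw_smul (c : ℝ≥0∞) (f : S → ℝ≥0∞) (N : ℕ) (j : S) :
    Phw q s z μ (fun l => c * f l) N j = c * Phw q s z μ f N j := by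
  induction N generalizing j with
  | zero => rfl
  | succ m ih =>
    calc Phw q s z μ (fun l => c * f l) (m + 1) j
        = Kap (bK q s z μ) (Phw q s z μ (fun l => c * f l) m) j := rfl
      _ = Kap (bK q s z μ) (fun l => c * Phw q s z μ f m l) j := by
          unfold Kap
          exact tsum_congr fun l => congrArg (fun x => bK q s z μ j l * x) (ih l)
      _ = c * Phw q s z μ f (m + 1) j := Kap_smul _ _ _ j

lemma Hit_succ_split (N : ℕ) (j : S) :
    Hit q s z μ (N + 1) j = Hit q s z μ N j + Phw q s z μ (aH q s z μ) N j := by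
  induction N generalizing j with
  | zero =>
    have : Hit q s z μ 1 j = aH q s z μ j + Kap (bK q s z μ) (fun _ => 0) j := rfl
    rw [this, Kap_zero, add_zero]
    simp [Hit, Phw]
  | succ m ih =>
    calc Hit q s z μ (m + 2) j
        = aH q s z μ j + Kap (bK q s z μ) (Hit q s z μ (m + 1)) j := rfl
      _ = aH q s z μ j
          + Kap (bK q s z μ) (fun l => Hit q s z μ m l + Phw q s z μ (aH q s z μ) m l) j := by
          unfold Kap
          exact congrArg _ (tsum_congr fun l =>
            congrArg (fun x => bK q s z μ j l * x) (ih l))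
      _ = aH q s z μ j + (Kap (bK q s z μ) (Hit q s z μ m) j
          + Kap (bK q s z μ) (Phw q s z μ (aH q s z μ) m) j) := by rw [Kap_add]
      _ = Hit q s z μ (m + 1) j + Phw q s z μ (aH q s z μ) (m + 1) j := by
          rw [← add_assoc]; rfl

lemma Hinf_telescope (N : ℕ) (j : S) :
    Hinf q s z μ j = Hit q s z μ N j + Phw q s z μ (Hinf q s z μ) N j := by
  induction N generalizing j with
  | zero => simp [Hit, Phw]
  | succ m ih =>
    have key : ∀ l, Phw q s z μ (Hinf q s z μ) m l
        = Phw q s z μ (aH q s z μ) m l + Phw q s z μ (Hinf q s z μ) (m + 1) l := by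
      intro l
      have h1 : Phw q s z μ (Hinf q s z μ) m l
          = Phw q s z μ (fun j => aH q s z μ j + Kap (bK q s z μ) (Hinf q s z μ) j) m l := by
        exact congrArg (fun f => Phw q s z μ f m l) (funext fun j => Hit_fixed q s z μ j)
      rw [h1, Phw_add]
      congr 1
      exact Phw_Kap_comm q s z μ (Hinf q s z μ) m l
    rw [ih j, key j, ← add_assoc, ← Hit_succ_split]

lemma Hit_Phw_eP (hsz : s ≠ z) (hq : ∀ k, totalRate q k ≠ ∞) (hqz : totalRate q z = 0)
    (hR0 : ∀ j, j ≠ z → totalRate q j ≠ 0) (hμz : μ z = 0) (hμ1 : ∑' k, μ k = 1) :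
    ∀ N j, Hit q s z μ N j + Phw q s z μ (eP z) N j = eP z j := by
  intro N
  induction N with
  | zero => intro j; simp [Hit, Phw]
  | succ m ih =>
    intro j
    by_cases hj : j = z
    · have h1 : Hit q s z μ (m + 1) j = 0 := by
        have h := Hit_le_eP q s z μ hsz hq hqz hR0 hμz hμ1 (m + 1) j
        simpa [eP, hj] using h
      have h2 : Phw q s z μ (eP z) (m + 1) j = 0 := by
        have hz0 : ∀ l, bK q s z μ j l * Phw q s z μ (eP z) m l = 0 := by
          intro l; rw [hj, bK_z q s z μ l, zero_mul]
        have he : Phw q s z μ (eP z) (m + 1) j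
            = Kap (bK q s z μ) (Phw q s z μ (eP z) m) j := rfl
        rw [he]
        unfold Kap
        rw [tsum_congr hz0, tsum_zero]
      rw [h1, h2, add_zero]
      simp [eP, hj]
    · calc Hit q s z μ (m + 1) j + Phw q s z μ (eP z) (m + 1) j
          = aH q s z μ j + (Kap (bK q s z μ) (Hit q s z μ m) j
            + Kap (bK q s z μ) (Phw q s z μ (eP z) m) j) := by
            show aH q s z μ j + Kap (bK q s z μ) (Hit q s z μ m) j
              + Kap (bK q s z μ) (Phw q s z μ (eP z) m) j = _
            rw [add_assoc]
        _ = aH q s z μ j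
            + Kap (bK q s z μ) (fun l => Hit q s z μ m l + Phw q s z μ (eP z) m l) j := by
            rw [Kap_add]
        _ = aH q s z μ j + Kap (bK q s z μ) (eP z) j := by
            congr 1
            unfold Kap
            exact tsum_congr fun l => congrArg (fun x => bK q s z μ j l * x) (ih l)
        _ = 1 := aH_rowsum q s z μ hsz hq hqz hR0 hμz hμ1 hj
        _ = eP z j := by simp [eP, hj]

end S3

namespace S3
variable {S : Type*} (q : S → S → ℝ≥0∞) (s z : S) (μ : S → ℝ≥0∞)
open Classical

lemma pHit_off (hsz : s ≠ z) (hq : ∀ k, totalRate q k ≠ ∞) {k : S} (hk : ¬(k = s ∨ k = z)) :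
    pHit q s z k = msol q s z (aF q s) k := by
  push_neg at hk
  rw [pHit, if_neg (not_or_intro hk.1 hk.2), probBefore_eq q s z hsz hq k]
  simp [PB, hk.1, hk.2]

lemma pHit_s (hsz : s ≠ z) (hq : ∀ k, totalRate q k ≠ ∞) :
    pHit q s z s = msol q s z (aF q s) s := by
  rw [pHit, if_pos (Or.inl rfl)]
  have h1 : ∀ i, jumpP q s i * probBefore q {s} {z} i = jumpP q s i * PB q s z i := by
    intro i; rw [probBefore_eq q s z hsz hq i]
  rw [tsum_congr h1, split3 s z hsz fun i => jumpP q s i * PB q s z i]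
  have h2 : PB q s z s = 1 := by simp [PB]
  have h3 : PB q s z z = 0 := by simp [PB, (Ne.symm hsz : ¬ z = s)]
  have h4 : ∀ l, (if l = s ∨ l = z then 0 else jumpP q s l * PB q s z l)
      = Qh q s z s l * msol q s z (aF q s) l := by
    intro l
    by_cases hl : l = s ∨ l = z
    · simp [Qh, hl]
    · push_neg at hl
      simp [Qh, hl.1, hl.2, PB]
  rw [h2, h3, tsum_congr h4]
  simp only [mul_one, mul_zero, add_zero]
  exact (msol_fixed q s z (aF q s) s).symm

lemma hR0_of_hp (hsz : s ≠ z) (hq : ∀ k, totalRate q k ≠ ∞) (hp : 0 < pInf q s z) :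
    ∀ j, j ≠ z → totalRate q j ≠ 0 := by
  intro j hjz h0
  have hq0 : ∀ i, q j i = 0 := fun i => ENNReal.tsum_eq_zero.mp h0 i
  have hvit : ∀ n, vit q s z (aF q s) n j = 0 := by
    intro n
    cases n with
    | zero => rfl
    | succ m =>
      have e1 : aF q s j = 0 := by simp [aF, jumpP, hq0]
      have e2 : Kap (Qh q s z) (vit q s z (aF q s) m) j = 0 := by
        unfold Kap
        have : ∀ l, Qh q s z j l * vit q s z (aF q s) m l = 0 := by
          intro l
          by_cases hl : l = s ∨ l = z
          · simp [Qh, hl]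
          · simp [Qh, hl, jumpP, hq0]
        rw [tsum_congr this, tsum_zero]
      have : vit q s z (aF q s) (m + 1) j
          = aF q s j + Kap (Qh q s z) (vit q s z (aF q s) m) j := rfl
      rw [this, e1, e2, add_zero]
  have hmsol : msol q s z (aF q s) j = 0 :=
    le_antisymm (iSup_le fun n => le_of_eq (hvit n)) (zero_le)
  have hple : pInf q s z ≤ pHit q s z j := iInf_le _ (⟨j, hjz⟩ : {k : S // k ≠ z})
  have hzero : pHit q s z j = 0 := by
    by_cases hjs : j = s
    · rw [hjs] at hmsol ⊢
      rw [pHit_s q s z hsz hq, hmsol]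
    · rw [pHit_off q s z hsz hq (not_or_intro hjs hjz), hmsol]
  rw [hzero] at hple
  exact absurd (le_antisymm hple (zero_le)) (ne_of_gt hp)

lemma aF_le_aH (hsz : s ≠ z) (hqz : totalRate q z = 0) (j : S) :
    aF q s j ≤ aH q s z μ j := by
  by_cases hj : j = z
  · have : q j s = 0 := by rw [hj]; exact qz_zero q z hqz s
    simp [aF, jumpP, this]
  · have h1 : retChain q z μ j s = q j s + q j z * μ s := by
      rw [retChain, if_neg]
      rintro (h | h)
      · exact hj h
      · exact hsz h
    rw [aF, aH, PK, h1, jumpP, div_eq_mul_inv]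
    exact mul_le_mul_left le_self_add _

lemma Qh_le_bK (hqz : totalRate q z = 0) (j l : S) :
    Qh q s z j l ≤ bK q s z μ j l := by
  rw [bK_decomp q s z μ hqz j l]
  exact le_self_add

lemma msol_a_le_Hinf (hsz : s ≠ z) (hqz : totalRate q z = 0) (j : S) :
    msol q s z (aF q s) j ≤ Hinf q s z μ j := by
  have key : ∀ n j, vit q s z (aF q s) n j ≤ Hit q s z μ n j := by
    intro n
    induction n with
    | zero => intro j; exact le_rfl
    | succ m ih =>
      intro j
      have h1 : Kap (Qh q s z) (vit q s z (aF q s) m) j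
          ≤ Kap (bK q s z μ) (Hit q s z μ m) j :=
        ENNReal.tsum_le_tsum fun l =>
          mul_le_mul (Qh_le_bK q s z μ hqz j l) (ih l) (zero_le) (zero_le)
      exact add_le_add (aF_le_aH q s z μ hsz hqz j) h1
  exact iSup_le fun n => le_trans (key n j) (le_iSup (fun n => Hit q s z μ n j) n)

lemma p_le_Hinf (hsz : s ≠ z) (hq : ∀ k, totalRate q k ≠ ∞) (hqz : totalRate q z = 0)
    {j : S} (hj : j ≠ z) :
    pInf q s z ≤ Hinf q s z μ j := by
  refine le_trans ?_ (msol_a_le_Hinf q s z μ hsz hqz j)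
  have h1 : pInf q s z ≤ pHit q s z j := iInf_le _ (⟨j, hj⟩ : {k : S // k ≠ z})
  by_cases hjs : j = s
  · rw [hjs] at h1 ⊢; rwa [pHit_s q s z hsz hq] at h1
  · rwa [pHit_off q s z hsz hq (not_or_intro hjs hj)] at h1

/-- Main lemma: under `hp`, the returned chain hits `s` almost surely. -/
lemma Hinf_one (hsz : s ≠ z) (hq : ∀ k, totalRate q k ≠ ∞) (hqz : totalRate q z = 0)
    (hR0 : ∀ j, j ≠ z → totalRate q j ≠ 0) (hμz : μ z = 0) (hμ1 : ∑' k, μ k = 1)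
    (hp : 0 < pInf q s z) {j : S} (hj : j ≠ z) :
    Hinf q s z μ j = 1 := by
  set x := Hinf q s z μ j with hx
  have hx1 : x ≤ 1 := by
    refine iSup_le fun N => ?_
    have := Hit_le_eP q s z μ hsz hq hqz hR0 hμz hμ1 N j
    simpa [eP, hj] using this
  have hxt : x ≠ ∞ := ne_top_of_le_ne_top ENNReal.one_ne_top hx1
  have hstep : ∀ N, Hit q s z μ N j + pInf q s z * (1 - x) ≤ x := by
    intro N
    have h1 : x = Hit q s z μ N j + Phw q s z μ (Hinf q s z μ) N j :=
      Hinf_telescope q s z μ N j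
    have h2 : pInf q s z * (1 - x) ≤ Phw q s z μ (Hinf q s z μ) N j := by
      have hle : ∀ l, pInf q s z * eP z l ≤ Hinf q s z μ l := by
        intro l
        by_cases hlz : l = z
        · simp [eP, hlz]
        · simp only [eP, if_neg hlz, mul_one]
          exact p_le_Hinf q s z μ hsz hq hqz hlz
      have h3 : Phw q s z μ (fun l => pInf q s z * eP z l) N j
          ≤ Phw q s z μ (Hinf q s z μ) N j := Phw_mono q s z μ hle N j
      rw [Phw_smul] at h3
      refine le_trans ?_ h3
      apply mul_le_mul_right
      have h4 : Hit q s z μ N j + Phw q s z μ (eP z) N j = 1 := by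
        have := Hit_Phw_eP q s z μ hsz hq hqz hR0 hμz hμ1 N j
        rwa [show eP z j = 1 by simp [eP, hj]] at this
      have h5 : Phw q s z μ (eP z) N j = 1 - Hit q s z μ N j := by
        have hne : Hit q s z μ N j ≠ ∞ := by
          refine ne_top_of_le_ne_top ENNReal.one_ne_top ?_
          calc Hit q s z μ N j ≤ x := le_iSup (fun N => Hit q s z μ N j) N
            _ ≤ 1 := hx1
        rw [← h4]
        rw [ENNReal.add_sub_cancel_left hne]
      rw [h5]
      exact tsub_le_tsub_left (le_iSup (fun N => Hit q s z μ N j) N) 1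
    calc Hit q s z μ N j + pInf q s z * (1 - x)
        ≤ Hit q s z μ N j + Phw q s z μ (Hinf q s z μ) N j := add_le_add_right h2 _
      _ = x := h1.symm
  have hsup : x + pInf q s z * (1 - x) ≤ x := by
    have : (⨆ N, Hit q s z μ N j) + pInf q s z * (1 - x) ≤ x := by
      rw [ENNReal.iSup_add]
      exact iSup_le hstep
    exact this
  have hzero : pInf q s z * (1 - x) ≤ 0 := by
    have := hsup
    rw [show x = x + 0 by rw [add_zero]] at this
    exact (ENNReal.add_le_add_iff_left hxt).mp (by rw [add_zero] at this ⊢; exact hsup)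
  have : pInf q s z * (1 - x) = 0 := le_antisymm hzero (zero_le)
  rcases mul_eq_zero.mp this with h | h
  · exact absurd h (ne_of_gt hp)
  · exact le_antisymm hx1 (tsub_eq_zero_iff_le.mp h)

end S3

namespace S3
variable {S : Type*} (q : S → S → ℝ≥0∞) (s z : S) (μ : S → ℝ≥0∞) (π : S → ℝ≥0∞)
open Classical

def dels : S → ℝ≥0∞ := fun l => if l = s then 1 else 0

/-- occupation measure iterates of the killed returned chain started at `s`. -/
def Gm : ℕ → S → ℝ≥0∞
  | 0 => fun _ => 0
  | N + 1 => fun l => dels s l + Map (Gm N) (bK q s z μ) l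

def gam : S → ℝ≥0∞ := fun l => ⨆ N, Gm q s z μ N l

/-- iterates of the flow measure under the killed kernel. -/
def nuit : ℕ → S → ℝ≥0∞
  | 0 => nu q π
  | N + 1 => fun l => Map (nuit N) (bK q s z μ) l

def mpow : ℕ → S → ℝ≥0∞
  | 0 => dels s
  | N + 1 => fun l => Map (mpow N) (bK q s z μ) l

lemma Gm_mono (l : S) : Monotone fun N => Gm q s z μ N l := by
  have key : ∀ N l, Gm q s z μ N l ≤ Gm q s z μ (N + 1) l := by
    intro N
    induction N with
    | zero => intro l; simp [Gm]
    | succ m ih => intro l; exact add_le_add_right (Map_mono ih l) _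
  exact monotone_nat_of_le_succ fun n => key n l

lemma Map_finsum (F : Finset ℕ) (m : ℕ → S → ℝ≥0∞) (K : S → S → ℝ≥0∞) (l : S) :
    Map (fun j => ∑ n ∈ F, m n j) K l = ∑ n ∈ F, Map (m n) K l := by
  unfold Map
  rw [← Summable.tsum_finsetSum fun i _ => ENNReal.summable]
  exact tsum_congr fun j => by rw [Finset.sum_mul]

lemma pr_dels (f : S → ℝ≥0∞) : pr (dels s) f = f s := by
  unfold pr
  rw [tsum_eq_single s]
  · simp [dels]
  · intro k hk; simp [dels, hk]

lemma mpow_pair : ∀ N f, pr (mpow q s z μ N) f = Phw q s z μ f N s := by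
  intro N
  induction N with
  | zero => intro f; exact pr_dels s f
  | succ m ih =>
    intro f
    calc pr (mpow q s z μ (m + 1)) f
        = pr (Map (mpow q s z μ m) (bK q s z μ)) f := rfl
      _ = pr (mpow q s z μ m) (Kap (bK q s z μ) f) := slide _ _ _
      _ = Phw q s z μ (Kap (bK q s z μ) f) m s := ih _
      _ = Kap (bK q s z μ) (Phw q s z μ f m) s := Phw_Kap_comm q s z μ f m s
      _ = Phw q s z μ f (m + 1) s := rfl

lemma Gm_eq_sum (N : ℕ) (l : S) :
    Gm q s z μ N l = ∑ n ∈ Finset.range N, mpow q s z μ n l := by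
  induction N generalizing l with
  | zero => simp [Gm]
  | succ m ih =>
    have h1 : Gm q s z μ (m + 1) l = dels s l + Map (Gm q s z μ m) (bK q s z μ) l := rfl
    have h2 : Map (Gm q s z μ m) (bK q s z μ) l
        = ∑ n ∈ Finset.range m, Map (mpow q s z μ n) (bK q s z μ) l := by
      rw [← Map_finsum]
      unfold Map
      exact tsum_congr fun j => congrArg (fun x => x * bK q s z μ j l) (ih j)
    have h3 : ∀ n, Map (mpow q s z μ n) (bK q s z μ) l = mpow q s z μ (n + 1) l :=
      fun n => rfl
    rw [h1, h2]
    simp only [h3]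
    rw [Finset.sum_range_succ', add_comm]
    rfl

lemma Hit_eq_sum (N : ℕ) (j : S) :
    Hit q s z μ N j = ∑ n ∈ Finset.range N, Phw q s z μ (aH q s z μ) n j := by
  induction N with
  | zero => simp [Hit]
  | succ m ih =>
    rw [Hit_succ_split, ih, Finset.sum_range_succ]

lemma Gm_pair_aH (N : ℕ) : pr (Gm q s z μ N) (aH q s z μ) = Hit q s z μ N s := by
  unfold pr
  have h1 : ∀ l, Gm q s z μ N l * aH q s z μ l
      = ∑ n ∈ Finset.range N, mpow q s z μ n l * aH q s z μ l := by
    intro l; rw [Gm_eq_sum, Finset.sum_mul]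
  rw [tsum_congr h1, Summable.tsum_finsetSum fun i _ => ENNReal.summable, Hit_eq_sum]
  exact Finset.sum_congr rfl fun n _ => mpow_pair q s z μ n (aH q s z μ)

lemma Map_nu_bK (hsz : s ≠ z) (hq : ∀ k, totalRate q k ≠ ∞) (hqz : totalRate q z = 0)
    (hR0 : ∀ j, j ≠ z → totalRate q j ≠ 0) (hμz : μ z = 0) (hμ1 : ∑' k, μ k = 1)
    (hπ : IsStationaryRates (retChain q z μ) π) :
    ∀ l, Map (nu q π) (bK q s z μ) l + nu q π s * dels s l = nu q π l := by
  intro l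
  by_cases hls : l = s
  · have h1 : Map (nu q π) (bK q s z μ) l = 0 := by
      unfold Map
      have : ∀ j, nu q π j * bK q s z μ j l = 0 := by
        intro j; simp [bK, hls]
      rw [tsum_congr this, tsum_zero]
    rw [h1, zero_add]
    simp [dels, hls]
  · have h1 : Map (nu q π) (bK q s z μ) l = Map (nu q π) (PK q z μ) l := by
      unfold Map
      refine tsum_congr fun j => ?_
      simp [bK, hls]
    rw [h1, nu_stat q z μ π hqz hq hR0 hμz hμ1 hπ l]
    simp [dels, hls]

lemma nuit_ID (hsz : s ≠ z) (hq : ∀ k, totalRate q k ≠ ∞) (hqz : totalRate q z = 0)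
    (hR0 : ∀ j, j ≠ z → totalRate q j ≠ 0) (hμz : μ z = 0) (hμ1 : ∑' k, μ k = 1)
    (hπ : IsStationaryRates (retChain q z μ) π) :
    ∀ N l, nuit q s z μ π N l + nu q π s * Gm q s z μ N l = nu q π l := by
  intro N
  induction N with
  | zero => intro l; simp [nuit, Gm]
  | succ m ih =>
    intro l
    have h1 : nuit q s z μ π (m + 1) l = Map (nuit q s z μ π m) (bK q s z μ) l := rfl
    have h2 : Gm q s z μ (m + 1) l = dels s l + Map (Gm q s z μ m) (bK q s z μ) l := rfl
    have h3 : nu q π s * Map (Gm q s z μ m) (bK q s z μ) l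
        = Map (fun j => nu q π s * Gm q s z μ m j) (bK q s z μ) l :=
      (Map_smul _ _ _ l).symm
    have h4 : Map (nuit q s z μ π m) (bK q s z μ) l
        + Map (fun j => nu q π s * Gm q s z μ m j) (bK q s z μ) l
        = Map (fun j => nuit q s z μ π m j + nu q π s * Gm q s z μ m j) (bK q s z μ) l :=
      (Map_add _ _ _ l).symm
    have h5 : Map (fun j => nuit q s z μ π m j + nu q π s * Gm q s z μ m j) (bK q s z μ) l
        = Map (nu q π) (bK q s z μ) l := by
      unfold Map
      exact tsum_congr fun j => congrArg (fun x => x * bK q s z μ j l) (ih j)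
    rw [h1, h2, mul_add, h3, add_left_comm, h4, h5,
      add_comm (nu q π s * dels s l) (Map (nu q π) (bK q s z μ) l)]
    exact Map_nu_bK q s z μ π hsz hq hqz hR0 hμz hμ1 hπ l

lemma nu_s_Gm_le (hsz : s ≠ z) (hq : ∀ k, totalRate q k ≠ ∞) (hqz : totalRate q z = 0)
    (hR0 : ∀ j, j ≠ z → totalRate q j ≠ 0) (hμz : μ z = 0) (hμ1 : ∑' k, μ k = 1)
    (hπ : IsStationaryRates (retChain q z μ) π) (N : ℕ) (l : S) : nu q π s * Gm q s z μ N l ≤ nu q π l := by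
  rw [← nuit_ID q s z μ π hsz hq hqz hR0 hμz hμ1 hπ N l]
  exact self_le_add_left _ _

lemma nuit_eq_sub (hsz : s ≠ z) (hq : ∀ k, totalRate q k ≠ ∞) (hqz : totalRate q z = 0)
    (hR0 : ∀ j, j ≠ z → totalRate q j ≠ 0) (hμz : μ z = 0) (hμ1 : ∑' k, μ k = 1)
    (hπ : IsStationaryRates (retChain q z μ) π) (N : ℕ) (l : S) :
    nuit q s z μ π N l = nu q π l - nu q π s * Gm q s z μ N l := by
  have h := nuit_ID q s z μ π hsz hq hqz hR0 hμz hμ1 hπ N l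
  have hfin : nu q π s * Gm q s z μ N l ≠ ∞ :=
    ne_top_of_le_ne_top (nu_ne_top q π hq hπ.1 l) (nu_s_Gm_le q s z μ π hsz hq hqz hR0 hμz hμ1 hπ N l)
  exact ENNReal.eq_sub_of_add_eq hfin h

lemma nu_s_gam_le (hsz : s ≠ z) (hq : ∀ k, totalRate q k ≠ ∞) (hqz : totalRate q z = 0)
    (hR0 : ∀ j, j ≠ z → totalRate q j ≠ 0) (hμz : μ z = 0) (hμ1 : ∑' k, μ k = 1)
    (hπ : IsStationaryRates (retChain q z μ) π) (l : S) : nu q π s * gam q s z μ l ≤ nu q π l := by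
  rw [gam, ENNReal.mul_iSup]
  exact iSup_le fun N => nu_s_Gm_le q s z μ π hsz hq hqz hR0 hμz hμ1 hπ N l

/-- the defect measure. -/
def rdef : S → ℝ≥0∞ := fun l => nu q π l - nu q π s * gam q s z μ l

lemma rdef_eq_iInf (hsz : s ≠ z) (hq : ∀ k, totalRate q k ≠ ∞) (hqz : totalRate q z = 0)
    (hR0 : ∀ j, j ≠ z → totalRate q j ≠ 0) (hμz : μ z = 0) (hμ1 : ∑' k, μ k = 1)
    (hπ : IsStationaryRates (retChain q z μ) π) (l : S) :
    rdef q s z μ π l = ⨅ N, nuit q s z μ π N l := by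
  unfold rdef
  rw [gam, ENNReal.mul_iSup, ENNReal.sub_iSup (nu_ne_top q π hq hπ.1 l)]
  exact iInf_congr fun N => (nuit_eq_sub q s z μ π hsz hq hqz hR0 hμz hμ1 hπ N l).symm

lemma rdef_le_nuit (hsz : s ≠ z) (hq : ∀ k, totalRate q k ≠ ∞) (hqz : totalRate q z = 0)
    (hR0 : ∀ j, j ≠ z → totalRate q j ≠ 0) (hμz : μ z = 0) (hμ1 : ∑' k, μ k = 1)
    (hπ : IsStationaryRates (retChain q z μ) π) (N : ℕ) (l : S) :
    rdef q s z μ π l ≤ nuit q s z μ π N l := by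
  rw [rdef_eq_iInf q s z μ π hsz hq hqz hR0 hμz hμ1 hπ]
  exact iInf_le _ N

lemma nuit_antitone (hsz : s ≠ z) (hq : ∀ k, totalRate q k ≠ ∞) (hqz : totalRate q z = 0)
    (hR0 : ∀ j, j ≠ z → totalRate q j ≠ 0) (hμz : μ z = 0) (hμ1 : ∑' k, μ k = 1)
    (hπ : IsStationaryRates (retChain q z μ) π) :
    ∀ N l, nuit q s z μ π (N + 1) l ≤ nuit q s z μ π N l := by
  intro N
  induction N with
  | zero =>
    intro l
    have h := Map_nu_bK q s z μ π hsz hq hqz hR0 hμz hμ1 hπ l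
    calc nuit q s z μ π 1 l = Map (nu q π) (bK q s z μ) l := rfl
      _ ≤ nu q π l := by rw [← h]; exact le_add_right le_rfl
  | succ m ih =>
    intro l
    exact Map_mono ih l

lemma Map_rdef_le (hsz : s ≠ z) (hq : ∀ k, totalRate q k ≠ ∞) (hqz : totalRate q z = 0)
    (hR0 : ∀ j, j ≠ z → totalRate q j ≠ 0) (hμz : μ z = 0) (hμ1 : ∑' k, μ k = 1)
    (hπ : IsStationaryRates (retChain q z μ) π) (l : S) :
    Map (rdef q s z μ π) (bK q s z μ) l ≤ rdef q s z μ π l := by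
  rw [rdef_eq_iInf q s z μ π hsz hq hqz hR0 hμz hμ1 hπ]
  refine le_iInf fun M => ?_
  have h1 : Map (rdef q s z μ π) (bK q s z μ) l ≤ nuit q s z μ π (M + 1) l :=
    Map_mono (fun j => rdef_le_nuit q s z μ π hsz hq hqz hR0 hμz hμ1 hπ M j) l
  exact le_trans h1 (nuit_antitone q s z μ π hsz hq hqz hR0 hμz hμ1 hπ M l)

lemma nu_pair_aH (hsz : s ≠ z) (hq : ∀ k, totalRate q k ≠ ∞) (hqz : totalRate q z = 0)
    (hR0 : ∀ j, j ≠ z → totalRate q j ≠ 0) (hμz : μ z = 0) (hμ1 : ∑' k, μ k = 1)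
    (hπ : IsStationaryRates (retChain q z μ) π) : pr (nu q π) (aH q s z μ) = nu q π s := by
  have h : pr (nu q π) (aH q s z μ) = Map (nu q π) (PK q z μ) s := rfl
  rw [h, nu_stat q z μ π hqz hq hR0 hμz hμ1 hπ s]

lemma nuit_pair_aH (hsz : s ≠ z) (hq : ∀ k, totalRate q k ≠ ∞) (hqz : totalRate q z = 0)
    (hR0 : ∀ j, j ≠ z → totalRate q j ≠ 0) (hμz : μ z = 0) (hμ1 : ∑' k, μ k = 1)
    (hπ : IsStationaryRates (retChain q z μ) π) (N : ℕ) :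
    pr (nuit q s z μ π N) (aH q s z μ) = nu q π s - nu q π s * Hit q s z μ N s := by
  have h1 : ∀ l, nuit q s z μ π N l * aH q s z μ l
      = nu q π l * aH q s z μ l - nu q π s * Gm q s z μ N l * aH q s z μ l := by
    intro l
    have haH : aH q s z μ l ≠ ∞ :=
      ne_top_of_le_ne_top ENNReal.one_ne_top
        (aH_le_one q s z μ hsz hq hqz hR0 hμz hμ1 l)
    rw [nuit_eq_sub q s z μ π hsz hq hqz hR0 hμz hμ1 hπ N l,
      ENNReal.sub_mul fun _ _ => haH]
  have h2 : ∑' l, nu q π s * Gm q s z μ N l * aH q s z μ l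
      = nu q π s * Hit q s z μ N s := by
    rw [← Gm_pair_aH q s z μ N]
    unfold pr
    rw [← ENNReal.tsum_mul_left]
    exact tsum_congr fun l => by ring
  have h3 : ∑' l, nu q π s * Gm q s z μ N l * aH q s z μ l ≠ ∞ := by
    rw [h2]
    refine ENNReal.mul_ne_top (nu_ne_top q π hq hπ.1 s) ?_
    refine ne_top_of_le_ne_top ENNReal.one_ne_top ?_
    have h5 := Hit_le_eP q s z μ hsz hq hqz hR0 hμz hμ1 N s
    simpa [eP, hsz] using h5
  have h4 : ∀ l, nu q π s * Gm q s z μ N l * aH q s z μ l ≤ nu q π l * aH q s z μ l :=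
    fun l => mul_le_mul_left (nu_s_Gm_le q s z μ π hsz hq hqz hR0 hμz hμ1 hπ N l) _
  unfold pr
  rw [tsum_congr h1, tsum_sub' h3 h4, h2]
  congr 1
  exact nu_pair_aH q s z μ π hsz hq hqz hR0 hμz hμ1 hπ

lemma rdef_pair_aH (hsz : s ≠ z) (hq : ∀ k, totalRate q k ≠ ∞) (hqz : totalRate q z = 0)
    (hR0 : ∀ j, j ≠ z → totalRate q j ≠ 0) (hμz : μ z = 0) (hμ1 : ∑' k, μ k = 1)
    (hπ : IsStationaryRates (retChain q z μ) π) (hp : 0 < pInf q s z) :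
    pr (rdef q s z μ π) (aH q s z μ) = 0 := by
  have h1 : ∀ N, pr (rdef q s z μ π) (aH q s z μ)
      ≤ nu q π s - nu q π s * Hit q s z μ N s := by
    intro N
    rw [← nuit_pair_aH q s z μ π hsz hq hqz hR0 hμz hμ1 hπ N]
    exact pr_mono_left fun l => rdef_le_nuit q s z μ π hsz hq hqz hR0 hμz hμ1 hπ N l
  have h2 : pr (rdef q s z μ π) (aH q s z μ)
      ≤ ⨅ N, (nu q π s - nu q π s * Hit q s z μ N s) := le_iInf h1
  have h3 : ⨅ N, (nu q π s - nu q π s * Hit q s z μ N s) = 0 := by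
    rw [← ENNReal.sub_iSup (nu_ne_top q π hq hπ.1 s)]
    have h4 : ⨆ N, nu q π s * Hit q s z μ N s = nu q π s * Hinf q s z μ s := by
      rw [Hinf, ENNReal.mul_iSup]
    rw [h4, Hinf_one q s z μ hsz hq hqz hR0 hμz hμ1 hp hsz, mul_one, tsub_self]
  rw [h3] at h2
  exact le_antisymm h2 (zero_le)

lemma rdef_pair_Hit (hsz : s ≠ z) (hq : ∀ k, totalRate q k ≠ ∞) (hqz : totalRate q z = 0)
    (hR0 : ∀ j, j ≠ z → totalRate q j ≠ 0) (hμz : μ z = 0) (hμ1 : ∑' k, μ k = 1)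
    (hπ : IsStationaryRates (retChain q z μ) π) (hp : 0 < pInf q s z) :
    ∀ M, pr (rdef q s z μ π) (Hit q s z μ M) = 0 := by
  intro M
  induction M with
  | zero => simp [pr, Hit]
  | succ m ih =>
    have h1 : pr (rdef q s z μ π) (Hit q s z μ (m + 1))
        = pr (rdef q s z μ π) (aH q s z μ)
          + pr (rdef q s z μ π) (Kap (bK q s z μ) (Hit q s z μ m)) := by
      rw [← pr_add]
      rfl
    have h2 : pr (rdef q s z μ π) (Kap (bK q s z μ) (Hit q s z μ m))
        ≤ pr (rdef q s z μ π) (Hit q s z μ m) := by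
      rw [← slide]
      exact pr_mono_left fun l => Map_rdef_le q s z μ π hsz hq hqz hR0 hμz hμ1 hπ l
    have h3 : pr (rdef q s z μ π) (Hit q s z μ (m + 1)) ≤ 0 := by
      rw [h1, rdef_pair_aH q s z μ π hsz hq hqz hR0 hμz hμ1 hπ hp, zero_add, ← ih]
      exact h2
    exact le_antisymm h3 (zero_le)

/-- THE MAIN REPRESENTATION: the flow measure is the occupation measure. -/
lemma main_rep (hsz : s ≠ z) (hq : ∀ k, totalRate q k ≠ ∞) (hqz : totalRate q z = 0)
    (hR0 : ∀ j, j ≠ z → totalRate q j ≠ 0) (hμz : μ z = 0) (hμ1 : ∑' k, μ k = 1)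
    (hπ : IsStationaryRates (retChain q z μ) π) (hp : 0 < pInf q s z) {l : S} (hl : l ≠ z) :
    nu q π l = nu q π s * gam q s z μ l := by
  have h1 : pr (rdef q s z μ π) (Hinf q s z μ) = 0 := by
    have h0 : pr (rdef q s z μ π) (Hinf q s z μ)
        = ⨆ M, pr (rdef q s z μ π) (Hit q s z μ M) := by
      unfold pr Hinf
      exact mct fun i => Hit_mono q s z μ i
    rw [h0]
    refine le_antisymm (iSup_le fun M => le_of_eq ?_) (zero_le)
    exact rdef_pair_Hit q s z μ π hsz hq hqz hR0 hμz hμ1 hπ hp M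
  have h2 : rdef q s z μ π l * Hinf q s z μ l ≤ 0 := by
    rw [← h1]
    exact ENNReal.le_tsum l
  have h3 : rdef q s z μ π l = 0 := by
    have hH : Hinf q s z μ l = 1 := Hinf_one q s z μ hsz hq hqz hR0 hμz hμ1 hp hl
    rw [hH, mul_one] at h2
    exact le_antisymm h2 (zero_le)
  have h4 : nu q π l ≤ nu q π s * gam q s z μ l := tsub_eq_zero_iff_le.mp h3
  exact le_antisymm h4 (nu_s_gam_le q s z μ π hsz hq hqz hR0 hμz hμ1 hπ l)

end S3

namespace S3
variable {S : Type*} (q : S → S → ℝ≥0∞) (s z : S) (μ : S → ℝ≥0∞)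
open Classical

def beta : ℝ≥0∞ := pr (gam q s z μ) (dF q z)
def rho : S → ℝ≥0∞ := fun l => dels s l + beta q s z μ * muh s z μ l

def Uit : ℕ → S → ℝ≥0∞
  | 0 => fun _ => 0
  | N + 1 => fun l => rho q s z μ l + Map (Uit N) (Qh q s z) l

lemma Map_gam_bK (l : S) :
    Map (gam q s z μ) (bK q s z μ) l = ⨆ N, Map (Gm q s z μ N) (bK q s z μ) l := by
  unfold Map gam
  exact mct' fun j => Gm_mono q s z μ j

lemma gam_fixed (l : S) :
    gam q s z μ l = dels s l + Map (gam q s z μ) (bK q s z μ) l := by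
  have h1 : gam q s z μ l = ⨆ N, Gm q s z μ (N + 1) l := by
    apply le_antisymm
    · exact iSup_le fun n => le_trans (Gm_mono q s z μ l (Nat.le_succ n))
        (le_iSup (fun n => Gm q s z μ (n + 1) l) n)
    · exact iSup_le fun n => le_iSup (fun n => Gm q s z μ n l) (n + 1)
  rw [h1, Map_gam_bK]
  calc ⨆ N, Gm q s z μ (N + 1) l
      = ⨆ N, (dels s l + Map (Gm q s z μ N) (bK q s z μ) l) := iSup_congr fun n => rfl
    _ = dels s l + ⨆ N, Map (Gm q s z μ N) (bK q s z μ) l := (ENNReal.add_iSup _).symm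

lemma gam_fixed' (hqz : totalRate q z = 0) (l : S) :
    gam q s z μ l = rho q s z μ l + Map (gam q s z μ) (Qh q s z) l := by
  rw [gam_fixed q s z μ l, Map_bK_decomp q s z μ hqz (gam q s z μ) l, rho]
  show dels s l + (Map (gam q s z μ) (Qh q s z) l + beta q s z μ * muh s z μ l)
      = dels s l + beta q s z μ * muh s z μ l + Map (gam q s z μ) (Qh q s z) l
  ring

lemma Uit_le_gam (hqz : totalRate q z = 0) : ∀ N l, Uit q s z μ N l ≤ gam q s z μ l := by
  intro N
  induction N with
  | zero => intro l; simp [Uit]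
  | succ m ih =>
    intro l
    calc Uit q s z μ (m + 1) l
        = rho q s z μ l + Map (Uit q s z μ m) (Qh q s z) l := rfl
      _ ≤ rho q s z μ l + Map (gam q s z μ) (Qh q s z) l :=
          add_le_add_right (Map_mono ih l) _
      _ = gam q s z μ l := (gam_fixed' q s z μ hqz l).symm

lemma Uit_mono (l : S) : Monotone fun N => Uit q s z μ N l := by
  have key : ∀ N l, Uit q s z μ N l ≤ Uit q s z μ (N + 1) l := by
    intro N
    induction N with
    | zero => intro l; simp [Uit]
    | succ m ih => intro l; exact add_le_add_right (Map_mono ih l) _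
  exact monotone_nat_of_le_succ fun n => key n l

def gamU : S → ℝ≥0∞ := fun l => ⨆ N, Uit q s z μ N l

lemma gamU_fixed (l : S) :
    gamU q s z μ l = rho q s z μ l + Map (gamU q s z μ) (Qh q s z) l := by
  have h1 : gamU q s z μ l = ⨆ N, Uit q s z μ (N + 1) l := by
    apply le_antisymm
    · exact iSup_le fun n => le_trans (Uit_mono q s z μ l (Nat.le_succ n))
        (le_iSup (fun n => Uit q s z μ (n + 1) l) n)
    · exact iSup_le fun n => le_iSup (fun n => Uit q s z μ n l) (n + 1)
  have h2 : Map (gamU q s z μ) (Qh q s z) l = ⨆ N, Map (Uit q s z μ N) (Qh q s z) l := by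
    unfold Map gamU
    exact mct' fun j => Uit_mono q s z μ j
  rw [h1, h2]
  calc ⨆ N, Uit q s z μ (N + 1) l
      = ⨆ N, (rho q s z μ l + Map (Uit q s z μ N) (Qh q s z) l) := iSup_congr fun n => rfl
    _ = rho q s z μ l + ⨆ N, Map (Uit q s z μ N) (Qh q s z) l := (ENNReal.add_iSup _).symm

lemma gamU_le_gam (hqz : totalRate q z = 0) (l : S) : gamU q s z μ l ≤ gam q s z μ l :=
  iSup_le fun N => Uit_le_gam q s z μ hqz N l

lemma Gm_le_gamU (hqz : totalRate q z = 0) : ∀ N l, Gm q s z μ N l ≤ gamU q s z μ l := by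
  intro N
  induction N with
  | zero => intro l; simp [Gm]
  | succ m ih =>
    intro l
    have h1 : Map (Gm q s z μ m) (bK q s z μ) l ≤ Map (gamU q s z μ) (bK q s z μ) l :=
      Map_mono ih l
    have h2 : pr (gamU q s z μ) (dF q z) ≤ beta q s z μ :=
      pr_mono_left fun j => gamU_le_gam q s z μ hqz j
    calc Gm q s z μ (m + 1) l
        = dels s l + Map (Gm q s z μ m) (bK q s z μ) l := rfl
      _ ≤ dels s l + Map (gamU q s z μ) (bK q s z μ) l := add_le_add_right h1 _
      _ = dels s l + (Map (gamU q s z μ) (Qh q s z) l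
          + pr (gamU q s z μ) (dF q z) * muh s z μ l) := by
          rw [Map_bK_decomp q s z μ hqz]
      _ ≤ dels s l + (Map (gamU q s z μ) (Qh q s z) l + beta q s z μ * muh s z μ l) := by
          exact add_le_add_right (add_le_add_right (mul_le_mul_left h2 _) _) _
      _ = rho q s z μ l + Map (gamU q s z μ) (Qh q s z) l := by rw [rho]; ring
      _ = gamU q s z μ l := (gamU_fixed q s z μ l).symm

lemma gam_eq_gamU (hqz : totalRate q z = 0) (l : S) : gam q s z μ l = gamU q s z μ l :=
  le_antisymm (iSup_le fun N => Gm_le_gamU q s z μ hqz N l) (gamU_le_gam q s z μ hqz l)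

lemma Uit_pair : ∀ N c, pr (Uit q s z μ N) c = pr (rho q s z μ) (vit q s z c N) := by
  intro N
  induction N with
  | zero =>
    intro c
    have h1 : pr (Uit q s z μ 0) c = 0 := by simp [pr, Uit]
    have h2 : pr (rho q s z μ) (vit q s z c 0) = 0 := by simp [pr, vit]
    rw [h1, h2]
  | succ m ih =>
    intro c
    calc pr (Uit q s z μ (m + 1)) c
        = pr (fun l => rho q s z μ l + Map (Uit q s z μ m) (Qh q s z) l) c := rfl
      _ = pr (rho q s z μ) c + pr (Map (Uit q s z μ m) (Qh q s z)) c := by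
          unfold pr
          simp only [add_mul]
          exact ENNReal.tsum_add
      _ = pr (rho q s z μ) c + pr (Uit q s z μ m) (Kap (Qh q s z) c) := by rw [slide]
      _ = pr (rho q s z μ) c + pr (rho q s z μ) (vit q s z (Kap (Qh q s z) c) m) := by
          rw [ih]
      _ = pr (rho q s z μ) (fun j => c j + vit q s z (Kap (Qh q s z) c) m j) := by
          rw [pr_add]
      _ = pr (rho q s z μ) (vit q s z c (m + 1)) := by
          unfold pr
          exact tsum_congr fun j =>
            congrArg (fun x => rho q s z μ j * x) (vit_succ_eq q s z c m j).symm

lemma pr_rho (f : S → ℝ≥0∞) :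
    pr (rho q s z μ) f = f s + beta q s z μ * pr (muh s z μ) f := by
  unfold rho
  have h1 : pr (fun l => dels s l + beta q s z μ * muh s z μ l) f
      = pr (dels s) f + pr (fun l => beta q s z μ * muh s z μ l) f := by
    unfold pr
    simp only [add_mul]
    exact ENNReal.tsum_add
  rw [h1, pr_dels]
  congr 1
  unfold pr
  rw [← ENNReal.tsum_mul_left]
  exact tsum_congr fun l => by ring

/-- THE PAIRING FORMULA for the cycle occupation measure. -/
lemma gam_pair (hqz : totalRate q z = 0) (c : S → ℝ≥0∞) :
    pr (gam q s z μ) c = msol q s z c s + beta q s z μ * pr (muh s z μ) (msol q s z c) := by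
  have h1 : pr (gam q s z μ) c = ⨆ N, pr (Uit q s z μ N) c := by
    have e : ∀ l, gam q s z μ l = gamU q s z μ l := gam_eq_gamU q s z μ hqz
    unfold pr
    rw [tsum_congr fun l => congrArg (fun x => x * c l) (e l)]
    unfold gamU
    exact mct' fun l => Uit_mono q s z μ l
  have h2 : ∀ N, pr (Uit q s z μ N) c = pr (rho q s z μ) (vit q s z c N) :=
    fun N => Uit_pair q s z μ N c
  have h3 : ⨆ N, pr (rho q s z μ) (vit q s z c N) = pr (rho q s z μ) (msol q s z c) := by
    unfold pr msol
    exact (mct fun i => vit_mono q s z c i).symm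
  rw [h1]
  simp only [h2]
  rw [h3, pr_rho]

lemma gam_s : gam q s z μ s = 1 := by
  apply le_antisymm
  · refine iSup_le fun N => ?_
    cases N with
    | zero => simp [Gm]
    | succ m =>
      have h1 : Gm q s z μ (m + 1) s = dels s s + Map (Gm q s z μ m) (bK q s z μ) s := rfl
      have h2 : Map (Gm q s z μ m) (bK q s z μ) s = 0 := by
        unfold Map
        have : ∀ j, Gm q s z μ m j * bK q s z μ j s = 0 := by
          intro j; simp [bK]
        rw [tsum_congr this, tsum_zero]
      rw [h1, h2, add_zero]
      simp [dels]
  · refine le_trans ?_ (le_iSup (fun N => Gm q s z μ N s) 1)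
    have h1 : Gm q s z μ 1 s = dels s s + Map (Gm q s z μ 0) (bK q s z μ) s := rfl
    have h2 : Map (Gm q s z μ 0) (bK q s z μ) s = 0 := by
      unfold Map
      have : ∀ j, Gm q s z μ 0 j * bK q s z μ j s = 0 := by
        intro j; simp [Gm]
      rw [tsum_congr this, tsum_zero]
    rw [h1, h2, add_zero]
    simp [dels]

end S3

open S3 in
/-- Lemma 2.3: `π^μ(C ∖ C_ζ) ≤ (1 - p_s)(ζ + M/p)` for every `μ` with `μ(T) ≤ M T_s`. -/
theorem stmt_3 {S : Type*} [Countable S] (q : S → S → ℝ≥0∞) (z s : S)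
    (hsz : s ≠ z) (hq : ∀ k, totalRate q k ≠ ⊤) (hqz : totalRate q z = 0)
    (hp : 0 < pInf q s z) (hT : ∀ k, k ≠ z → excT q s z k < ⊤)
    (μ : S → ℝ≥0∞) (hμz : μ z = 0) (hμ1 : ∑' k, μ k = 1)
    (π : S → ℝ≥0∞) (hπ : IsStationaryRates (retChain q z μ) π) (hπz : π z = 0)
    (Cζ : Set S) (hsC : s ∈ Cζ) (hzC : z ∉ Cζ) (ζ M : ℝ≥0∞)
    (hCζ : (∑' k : ↥Cζᶜ, occT q s z ↑k) ≤
      ζ * (1 - pHit q s z s) * (∑' k, occT q s z k))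
    (hM : muT q s z μ ≤ M * (∑' k, occT q s z k)) :
    (∑' k : ↥Cζᶜ, π ↑k) ≤ (1 - pHit q s z s) * (ζ + M / pInf q s z) := by
  classical
  have hR0 : ∀ j, j ≠ z → totalRate q j ≠ 0 := hR0_of_hp q s z hsz hq hp
  set p := pInf q s z with hpdef
  set ps := pHit q s z s with hpsdef
  -- abbreviations
  set νs := nu q π s with hνs
  set γ := gam q s z μ with hγ
  set β := beta q s z μ with hβ
  set cA := cset q s z Cζᶜ with hcA
  set cwv := cw q s z with hcw
  -- occupation sums
  have hTs : (∑' k, occT q s z k) = (totalRate q s)⁻¹ + msol q s z cwv s :=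
    occT_total q s z hsz
  set Ts := (∑' k, occT q s z k) with hTsdef
  -- representation of π
  have hrep : ∀ l, l ≠ z → π l = νs * γ l * (totalRate q l)⁻¹ := by
    intro l hl
    have h1 : π l = nu q π l * (totalRate q l)⁻¹ := by
      unfold S3.nu
      rw [mul_assoc, ENNReal.mul_inv_cancel (hR0 l hl) (hq l), mul_one]
    rw [h1, main_rep q s z μ π hsz hq hqz hR0 hμz hμ1 hπ hp hl]
  -- the weight for total mass
  set w' : S → ℝ≥0∞ := fun l => if l = z then 0 else (totalRate q l)⁻¹ with hw'
  have hpoint : ∀ l, π l = νs * (γ l * w' l) := by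
    intro l
    by_cases hl : l = z
    · simp only [hw', if_pos hl, mul_zero]
      rw [hl, hπz]
    · simp only [hw', if_neg hl]
      rw [hrep l hl, mul_assoc]
  -- total mass identity
  have hWpair : pr γ w' = (totalRate q s)⁻¹
      + (msol q s z cwv s + β * pr (muh s z μ) (msol q s z cwv)) := by
    have hsplit : ∀ l, w' l
        = (if l = s then (totalRate q s)⁻¹ else 0) + cset q s z Set.univ l := by
      intro l
      by_cases hls : l = s
      · have : ¬(l = z) := by rw [hls]; exact hsz
        simp [hw', hls, this, cset, hsz]
      · by_cases hlz : l = z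
        · simp [hw', hls, hlz, cset, (Ne.symm hsz : ¬ z = s)]
        · simp [hw', hls, hlz, cset]
    have h1 : pr γ w' = pr γ (fun l => if l = s then (totalRate q s)⁻¹ else 0)
        + pr γ (cset q s z Set.univ) := by
      unfold pr
      rw [← ENNReal.tsum_add]
      exact tsum_congr fun l => by rw [hsplit l, mul_add]
    have h2 : pr γ (fun l => if l = s then (totalRate q s)⁻¹ else 0)
        = (totalRate q s)⁻¹ := by
      unfold pr
      rw [tsum_eq_single s]
      · simp [hγ, gam_s]
      · intro k hk; simp [hk]
    have h3 : pr γ (cset q s z Set.univ) = msol q s z cwv s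
        + β * pr (muh s z μ) (msol q s z cwv) := by
      have e : cset q s z (Set.univ : Set S) = cwv :=
        funext fun l => cset_univ_eq_cw q s z l
      rw [hγ, gam_pair q s z μ hqz, e]
    rw [h1, h2, h3]
  set Wd := (totalRate q s)⁻¹ + (msol q s z cwv s + β * pr (muh s z μ) (msol q s z cwv))
    with hWd
  have hnorm : νs * Wd = 1 := by
    rw [← hWpair]
    have h1 : (1 : ℝ≥0∞) = ∑' l, π l := hπ.1.symm
    rw [h1, tsum_congr hpoint, ENNReal.tsum_mul_left]
    rfl
  -- the left-hand side
  have hLHS : (∑' k : ↥Cζᶜ, π ↑k)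
      = νs * (msol q s z cA s + β * pr (muh s z μ) (msol q s z cA)) := by
    rw [tsum_subtype]
    have hpt : ∀ k, Set.indicator Cζᶜ π k = νs * (γ k * cA k) := by
      intro k
      rw [Set.indicator_apply]
      by_cases hk : k ∈ Cζᶜ
      · rw [if_pos hk]
        have hks : k ≠ s := by
          intro h
          rw [h] at hk
          exact (Set.mem_compl_iff _ _).mp hk hsC
        by_cases hkz : k = z
        · have : cA k = 0 := by simp [hcA, cset, hkz]
          rw [this, mul_zero, mul_zero, hkz, hπz]
        · have : cA k = (totalRate q k)⁻¹ := by
            simp [hcA, cset, hk, hks, hkz]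
          rw [this, hrep k hkz, mul_assoc]
      · rw [if_neg hk]
        have : cA k = 0 := by simp [hcA, cset, hk]
        rw [this, mul_zero, mul_zero]
    rw [tsum_congr hpt, ENNReal.tsum_mul_left]
    congr 1
    rw [hγ, hcA, ← gam_pair q s z μ hqz]
    rfl
  -- occupation-sum identification for `Cζᶜ`
  have hOA : (∑' k : ↥Cζᶜ, occT q s z ↑k) = msol q s z cA s := by
    rw [tsum_subtype]
    have hpt : ∀ k, Set.indicator Cζᶜ (occT q s z) k = ind Cζᶜ k * occT q s z k := by
      intro k
      rw [Set.indicator_apply]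
      by_cases hk : k ∈ Cζᶜ <;> simp [ind, hk]
    rw [tsum_congr hpt, occT_sum q s z hsz Cζᶜ]
    have : ind Cζᶜ s = 0 := by
      have hs' : s ∉ Cζᶜ := Set.notMem_compl_iff.mpr hsC
      simp [ind, hs']
    rw [this, zero_mul, zero_add]
  -- bounds
  have hMW_le_muT : pr (muh s z μ) (msol q s z cwv) ≤ muT q s z μ := by
    unfold pr muT
    refine ENNReal.tsum_le_tsum fun l => ?_
    by_cases hl : l = s ∨ l = z
    · simp [muh, hl]
    · have h1 : muh s z μ l = μ l := by simp [muh, hl]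
      have h2 : msol q s z cwv l = excT q s z l := by
        rw [excT, if_neg hl, hitTime_eq q s z hsz l, HT, if_neg hl]
      rw [h1, h2]
  have hMA_le_MW : pr (muh s z μ) (msol q s z cA) ≤ pr (muh s z μ) (msol q s z cwv) :=
    pr_mono fun l => msol_mono q s z (fun j => cset_compl_le_cw q s z Cζᶜ j) l
  have hTs_le_Wd : Ts ≤ Wd := by
    rw [hTs, hWd]
    exact add_le_add_right le_self_add _
  have hνsTs : νs * Ts ≤ 1 := by
    rw [← hnorm]
    exact mul_le_mul_right hTs_le_Wd _
  -- the key quantity bounds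
  have hterm1 : νs * msol q s z cA s ≤ (1 - ps) * ζ := by
    rw [← hOA]
    calc νs * (∑' k : ↥Cζᶜ, occT q s z ↑k)
        ≤ νs * (ζ * (1 - ps) * Ts) := mul_le_mul_right hCζ _
      _ = ζ * (1 - ps) * (νs * Ts) := by ring
      _ ≤ ζ * (1 - ps) * 1 := mul_le_mul_right hνsTs _
      _ = (1 - ps) * ζ := by ring
  -- probabilities
  have hps_eq : ps = msol q s z (aF q s) s := pHit_s q s z hsz hq
  have hp_le_one : p ≤ 1 := by
    have h1 : p ≤ pHit q s z s := iInf_le _ (⟨s, hsz⟩ : {k : S // k ≠ z})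
    rw [← hpsdef] at h1
    exact le_trans h1 (by rw [hps_eq]; exact msol_a_le_one q s z hsz hq s)
  have hp_ne_top : p ≠ ∞ := ne_top_of_le_ne_top ENNReal.one_ne_top hp_le_one
  have hDs : msol q s z (dF q z) s ≤ 1 - ps := by
    rw [hps_eq]
    refine ENNReal.le_sub_of_add_le_left ?_ (msol_ad_le_one q s z hsz hq s)
    exact ne_top_of_le_ne_top ENNReal.one_ne_top (msol_a_le_one q s z hsz hq s)
  have hMD : pr (muh s z μ) (msol q s z (dF q z)) ≤ 1 - p := by
    have hpt : ∀ l, muh s z μ l * msol q s z (dF q z) l ≤ muh s z μ l * (1 - p) := by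
      intro l
      by_cases hl : l = s ∨ l = z
      · simp [muh, hl]
      · refine mul_le_mul_right ?_ _
        have h1 : p ≤ msol q s z (aF q s) l := by
          have h2 : p ≤ pHit q s z l := by
            have hlz : l ≠ z := fun h => hl (Or.inr h)
            exact iInf_le _ (⟨l, hlz⟩ : {k : S // k ≠ z})
          rwa [pHit_off q s z hsz hq hl] at h2
        have h3 : msol q s z (aF q s) l + msol q s z (dF q z) l ≤ 1 :=
          msol_ad_le_one q s z hsz hq l
        calc msol q s z (dF q z) l ≤ 1 - msol q s z (aF q s) l :=
              ENNReal.le_sub_of_add_le_left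
                (ne_top_of_le_ne_top ENNReal.one_ne_top (msol_a_le_one q s z hsz hq l)) h3
          _ ≤ 1 - p := tsub_le_tsub_left h1 1
    calc pr (muh s z μ) (msol q s z (dF q z)) ≤ ∑' l, muh s z μ l * (1 - p) :=
          ENNReal.tsum_le_tsum hpt
      _ = (∑' l, muh s z μ l) * (1 - p) := ENNReal.tsum_mul_right
      _ ≤ 1 * (1 - p) := by
          refine mul_le_mul_left ?_ _
          rw [← hμ1]
          refine ENNReal.tsum_le_tsum fun l => ?_
          by_cases hl : l = s ∨ l = z <;> simp [muh, hl]
      _ = 1 - p := one_mul _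
  have hbeta_rec : β = msol q s z (dF q z) s
      + β * pr (muh s z μ) (msol q s z (dF q z)) :=
    gam_pair q s z μ hqz (dF q z)
  have hbeta_le : β ≤ (1 - ps) + β * (1 - p) := by
    calc β = msol q s z (dF q z) s + β * pr (muh s z μ) (msol q s z (dF q z)) := hbeta_rec
      _ ≤ (1 - ps) + β * (1 - p) := add_le_add hDs (mul_le_mul_right hMD _)
  -- final assembly
  rw [hLHS, mul_add]
  have hterm2 : νs * (β * pr (muh s z μ) (msol q s z cA)) ≤ (1 - ps) * (M / p) := by
    by_cases hMW0 : pr (muh s z μ) (msol q s z cwv) = 0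
    · have : pr (muh s z μ) (msol q s z cA) = 0 :=
        le_antisymm (hMW0 ▸ hMA_le_MW) (zero_le)
      rw [this, mul_zero, mul_zero]
      exact zero_le
    · -- β is finite
      have hWd_ne_top : Wd ≠ ∞ := by
        intro hWtop
        rw [hWtop] at hnorm
        rcases eq_or_ne νs 0 with h | h
        · rw [h, zero_mul] at hnorm; exact zero_ne_one hnorm
        · rw [ENNReal.mul_top h] at hnorm
          exact ENNReal.top_ne_one hnorm
      have hβ_ne_top : β ≠ ∞ := by
        intro hβtop
        apply hWd_ne_top
        have h1 : β * pr (muh s z μ) (msol q s z cwv) ≤ Wd := by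
          rw [hWd]
          calc β * pr (muh s z μ) (msol q s z cwv)
              ≤ msol q s z cwv s + β * pr (muh s z μ) (msol q s z cwv) := le_add_self
            _ ≤ _ := le_add_self
        rw [hβtop, ENNReal.top_mul hMW0] at h1
        exact top_le_iff.mp h1
      have hβp : β * p ≤ 1 - ps := by
        have h1 : β * p + β * (1 - p) ≤ (1 - ps) + β * (1 - p) := by
          have : β * p + β * (1 - p) = β := by
            rw [← mul_add, add_tsub_cancel_of_le hp_le_one, mul_one]
          rw [this]
          exact hbeta_le
        have h2 : β * (1 - p) ≠ ∞ :=
          ENNReal.mul_ne_top hβ_ne_top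
            (ne_top_of_le_ne_top ENNReal.one_ne_top tsub_le_self)
        exact (ENNReal.add_le_add_iff_right h2).mp h1
      have hβ_le_div : β ≤ (1 - ps) / p :=
        (ENNReal.le_div_iff_mul_le (Or.inl (ne_of_gt hp)) (Or.inl hp_ne_top)).mpr hβp
      calc νs * (β * pr (muh s z μ) (msol q s z cA))
          ≤ νs * (β * muT q s z μ) :=
            mul_le_mul_right (mul_le_mul_right (le_trans hMA_le_MW hMW_le_muT) _) _
        _ ≤ νs * (β * (M * Ts)) := mul_le_mul_right (mul_le_mul_right hM _) _
        _ = β * M * (νs * Ts) := by ring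
        _ ≤ β * M * 1 := mul_le_mul_right hνsTs _
        _ = β * M := mul_one _
        _ ≤ (1 - ps) / p * M := mul_le_mul_left hβ_le_div _
        _ = (1 - ps) * (M / p) := by
            rw [div_eq_mul_inv, div_eq_mul_inv]
            ring
  calc νs * msol q s z cA s + νs * (β * pr (muh s z μ) (msol q s z cA))
      ≤ (1 - ps) * ζ + (1 - ps) * (M / p) := add_le_add hterm1 hterm2
    _ = (1 - ps) * (ζ + M / p) := (mul_add _ _ _).symm
end
end

section
/- Let f(r) = r^{-m} e^{β r²} for r > 0, with m > 1 and β > 0, and F_ρ(r) = ∫_ρ^r f(t) dt. Then for ρ < R with 2βR(R−ρ) ≥ 1 and any r ∈ [ρ, R], F_ρ(r)/F_ρ(R) ≤ (4β R^{m+1} / ((m−1) ρ^{m−1})) · e^{β(r² − R²)}. -/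
open Real

private lemma keyalg (c a b d X Y R β E : ℝ) (hc : c ≠ 0) (ha : a ≠ 0) (hβ : β ≠ 0)
    (hR : R ≠ 0) (e1 : X * Y = E) (e2 : b * d = R) :
    E * (a⁻¹ / c) = 4 * β * b / (c * a) * X * (Y * d / (4 * β * R)) := by
  subst e1 e2
  have hb : b ≠ 0 := left_ne_zero_of_mul hR
  have hd : d ≠ 0 := right_ne_zero_of_mul hR
  field_simp

/-- The analytic core of the bound (p-bnd) in Section 4: for `f(t) = t^{-m} e^{βt²}`
and `F_ρ(r) = ∫_ρ^r f`, if `2βR(R-ρ) ≥ 1` then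
`F_ρ(r)/F_ρ(R) ≤ (4β R^{m+1}/((m-1)ρ^{m-1})) e^{β(r²-R²)}` for `r ∈ [ρ, R]`. -/
theorem stmt_15 (m β ρ R r : ℝ) (hm : 1 < m) (hβ : 0 < β) (hρ : 0 < ρ)
    (hρR : ρ < R) (hcond : 1 ≤ 2 * β * R * (R - ρ)) (hr : r ∈ Set.Icc ρ R) :
    (∫ t in ρ..r, t ^ (-m) * Real.exp (β * t ^ 2)) /
        (∫ t in ρ..R, t ^ (-m) * Real.exp (β * t ^ 2)) ≤
      4 * β * R ^ (m + 1) / ((m - 1) * ρ ^ (m - 1)) *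
        Real.exp (β * (r ^ 2 - R ^ 2)) := by
  obtain ⟨hr1, hr2⟩ := hr
  have hR : 0 < R := hρ.trans hρR
  have hrpos : 0 < r := hρ.trans_le hr1
  have hm1 : 0 < m - 1 := by linarith
  -- continuity of t ↦ t^(-m) away from 0
  have hcpow : ∀ a b : ℝ, 0 < a → 0 < b →
      ContinuousOn (fun t : ℝ => t ^ (-m)) (Set.uIcc a b) := by
    intro a b ha hb t ht
    have ht0 : t ≠ 0 := by
      rcases Set.mem_uIcc.mp ht with ⟨h1, _⟩ | ⟨h1, _⟩ <;> nlinarith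
    exact (Real.continuousAt_rpow_const t (-m) (Or.inl ht0)).continuousWithinAt
  have hint : ∀ a b : ℝ, 0 < a → 0 < b →
      IntervalIntegrable (fun t => t ^ (-m) * Real.exp (β * t ^ 2))
        MeasureTheory.volume a b := by
    intro a b ha hb
    exact ((hcpow a b ha hb).mul
      (Continuous.continuousOn (by continuity))).intervalIntegrable
  -- Upper bound of the numerator
  have hA : (∫ t in ρ..r, t ^ (-m) * Real.exp (β * t ^ 2)) ≤
      Real.exp (β * r ^ 2) * (ρ ^ (-(m - 1)) / (m - 1)) := by
    have hint2 : IntervalIntegrable (fun t : ℝ => t ^ (-m) * Real.exp (β * r ^ 2))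
        MeasureTheory.volume ρ r :=
      ((hcpow ρ r hρ hrpos).mul continuousOn_const).intervalIntegrable
    have step1 : (∫ t in ρ..r, t ^ (-m) * Real.exp (β * t ^ 2)) ≤
        ∫ t in ρ..r, t ^ (-m) * Real.exp (β * r ^ 2) := by
      apply intervalIntegral.integral_mono_on hr1 (hint ρ r hρ hrpos) hint2
      intro t ht
      have ht1 : ρ ≤ t := ht.1
      have ht2 : t ≤ r := ht.2
      have htnn : (0:ℝ) ≤ t := by linarith
      have : β * t ^ 2 ≤ β * r ^ 2 := by
        nlinarith [mul_le_mul ht2 ht2 htnn (htnn.trans ht2)]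
      exact mul_le_mul_of_nonneg_left (Real.exp_le_exp.2 this) (Real.rpow_nonneg htnn _)
    have step2 : (∫ t in ρ..r, t ^ (-m) * Real.exp (β * r ^ 2)) =
        (∫ t in ρ..r, t ^ (-m)) * Real.exp (β * r ^ 2) :=
      intervalIntegral.integral_mul_const _ _
    have step3 : (∫ t in ρ..r, t ^ (-m)) = (r ^ (-m + 1) - ρ ^ (-m + 1)) / (-m + 1) := by
      apply integral_rpow
      right
      constructor
      · intro h; rw [neg_eq_iff_eq_neg] at h; linarith
      · exact Set.notMem_uIcc_of_lt hρ hrpos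
    have step4 : (r ^ (-m + 1) - ρ ^ (-m + 1)) / (-m + 1) ≤ ρ ^ (-(m - 1)) / (m - 1) := by
      have h1 : (r ^ (-m + 1) - ρ ^ (-m + 1)) / (-m + 1) =
          (ρ ^ (-(m - 1)) - r ^ (-(m - 1))) / (m - 1) := by
        rw [show -m + 1 = -(m - 1) by ring]
        rw [div_eq_div_iff (by linarith) (by linarith)]
        ring
      rw [h1, div_le_div_iff₀ hm1 hm1]
      have : (0:ℝ) ≤ r ^ (-(m - 1)) := Real.rpow_nonneg hrpos.le _
      nlinarith
    calc (∫ t in ρ..r, t ^ (-m) * Real.exp (β * t ^ 2)) ≤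
        (∫ t in ρ..r, t ^ (-m)) * Real.exp (β * r ^ 2) := by rw [← step2]; exact step1
      _ ≤ (ρ ^ (-(m - 1)) / (m - 1)) * Real.exp (β * r ^ 2) := by
          apply mul_le_mul_of_nonneg_right _ (Real.exp_nonneg _)
          rw [step3]; exact step4
      _ = Real.exp (β * r ^ 2) * (ρ ^ (-(m - 1)) / (m - 1)) := by ring
  -- Lower bound of the denominator
  have hB : Real.exp (β * R ^ 2) * R ^ (-m) / (4 * β * R) ≤
      ∫ t in ρ..R, t ^ (-m) * Real.exp (β * t ^ 2) := by
    set g : ℝ → ℝ := fun t => R ^ (-m) * Real.exp (-(β * R ^ 2) + 2 * β * R * t) with hg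
    have hgc : Continuous g := by
      apply continuous_const.mul
      exact Real.continuous_exp.comp (by continuity)
    have hgle : ∀ t ∈ Set.Icc ρ R, g t ≤ t ^ (-m) * Real.exp (β * t ^ 2) := by
      intro t ht
      have ht1 : ρ ≤ t := ht.1
      have ht2 : t ≤ R := ht.2
      have htpos : 0 < t := by linarith
      have h1 : R ^ (-m) ≤ t ^ (-m) :=
        Real.rpow_le_rpow_of_nonpos htpos ht2 (by linarith)
      have h2 : Real.exp (-(β * R ^ 2) + 2 * β * R * t) ≤ Real.exp (β * t ^ 2) := by
        apply Real.exp_le_exp.2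
        nlinarith [sq_nonneg (t - R)]
      exact mul_le_mul h1 h2 (Real.exp_nonneg _) (Real.rpow_nonneg htpos.le _)
    have hderiv : ∀ t : ℝ, HasDerivAt
        (fun t => R ^ (-m) * (Real.exp (-(β * R ^ 2) + 2 * β * R * t) / (2 * β * R)))
        (g t) t := by
      intro t
      have h1 : HasDerivAt (fun t : ℝ => -(β * R ^ 2) + 2 * β * R * t) (2 * β * R) t := by
        simpa using ((hasDerivAt_id t).const_mul (2 * β * R)).const_add (-(β * R ^ 2))
      have h3 := (h1.exp.div_const (2 * β * R)).const_mul (R ^ (-m))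
      convert h3 using 1
      · rfl
      · rfl
      have h2βR : (2 * β * R) ≠ 0 := by positivity
      simp only [hg]
      field_simp
    have hgint : (∫ t in ρ..R, g t) =
        R ^ (-m) * (Real.exp (-(β * R ^ 2) + 2 * β * R * R) / (2 * β * R)) -
        R ^ (-m) * (Real.exp (-(β * R ^ 2) + 2 * β * R * ρ) / (2 * β * R)) := by
      exact intervalIntegral.integral_eq_sub_of_hasDerivAt (fun t _ => hderiv t)
        (hgc.intervalIntegrable ρ R)
    have hmono : (∫ t in ρ..R, g t) ≤ ∫ t in ρ..R, t ^ (-m) * Real.exp (β * t ^ 2) :=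
      intervalIntegral.integral_mono_on hρR.le (hgc.intervalIntegrable ρ R)
        (hint ρ R hρ hR) hgle
    -- numeric estimate
    have he1 : Real.exp (-(β * R ^ 2) + 2 * β * R * ρ) ≤ Real.exp (β * R ^ 2) / 2 := by
      have h1 : Real.exp (-(β * R ^ 2) + 2 * β * R * ρ) ≤ Real.exp (β * R ^ 2 - 1) := by
        apply Real.exp_le_exp.2; nlinarith
      have h2 : Real.exp (β * R ^ 2 - 1) = Real.exp (β * R ^ 2) / Real.exp 1 := by
        rw [Real.exp_sub]
      have h3 : (2:ℝ) ≤ Real.exp 1 := by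
        have := Real.add_one_le_exp 1; linarith
      have h4 : Real.exp (β * R ^ 2) / Real.exp 1 ≤ Real.exp (β * R ^ 2) / 2 := by
        apply div_le_div_of_nonneg_left (Real.exp_nonneg _) (by norm_num) h3
      linarith
    have he2 : -(β * R ^ 2) + 2 * β * R * R = β * R ^ 2 := by ring
    have hRm : (0:ℝ) < R ^ (-m) := Real.rpow_pos_of_pos hR _
    calc Real.exp (β * R ^ 2) * R ^ (-m) / (4 * β * R)
        ≤ R ^ (-m) * (Real.exp (-(β * R ^ 2) + 2 * β * R * R) / (2 * β * R)) -
          R ^ (-m) * (Real.exp (-(β * R ^ 2) + 2 * β * R * ρ) / (2 * β * R)) := by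
          rw [he2]
          have h6 : Real.exp (β * R ^ 2) * R ^ (-m) / (4 * β * R) =
              R ^ (-m) * ((Real.exp (β * R ^ 2) / 2) / (2 * β * R)) := by
            field_simp; ring
          have h7 : R ^ (-m) * (Real.exp (β * R ^ 2) / (2 * β * R)) -
              R ^ (-m) * (Real.exp (-(β * R ^ 2) + 2 * β * R * ρ) / (2 * β * R)) =
              R ^ (-m) * ((Real.exp (β * R ^ 2) -
                Real.exp (-(β * R ^ 2) + 2 * β * R * ρ)) / (2 * β * R)) := by ring
          rw [h6, h7]
          gcongr
          linarith
      _ = ∫ t in ρ..R, g t := hgint.symm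
      _ ≤ _ := hmono
  have hDpos : 0 < ∫ t in ρ..R, t ^ (-m) * Real.exp (β * t ^ 2) := by
    have : (0:ℝ) < Real.exp (β * R ^ 2) * R ^ (-m) / (4 * β * R) := by positivity
    linarith
  rw [div_le_iff₀ hDpos]
  have hcoef : 0 ≤ 4 * β * R ^ (m + 1) / ((m - 1) * ρ ^ (m - 1)) *
      Real.exp (β * (r ^ 2 - R ^ 2)) := by positivity
  have key : Real.exp (β * r ^ 2) * (ρ ^ (-(m - 1)) / (m - 1)) =
      4 * β * R ^ (m + 1) / ((m - 1) * ρ ^ (m - 1)) * Real.exp (β * (r ^ 2 - R ^ 2)) *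
        (Real.exp (β * R ^ 2) * R ^ (-m) / (4 * β * R)) := by
    have e1 : Real.exp (β * (r ^ 2 - R ^ 2)) * Real.exp (β * R ^ 2) =
        Real.exp (β * r ^ 2) := by
      rw [← Real.exp_add]; congr 1; ring
    have e2 : R ^ (m + 1) * R ^ (-m) = R := by
      rw [← Real.rpow_add hR]; norm_num
    have e3 : ρ ^ (-(m - 1)) = (ρ ^ (m - 1))⁻¹ := Real.rpow_neg hρ.le _
    have hρm : (0:ℝ) < ρ ^ (m - 1) := Real.rpow_pos_of_pos hρ _
    rw [e3]
    exact keyalg (m - 1) (ρ ^ (m - 1)) (R ^ (m + 1)) (R ^ (-m))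
      (Real.exp (β * (r ^ 2 - R ^ 2))) (Real.exp (β * R ^ 2)) R β (Real.exp (β * r ^ 2))
      hm1.ne' hρm.ne' hβ.ne' hR.ne' e1 e2
  calc (∫ t in ρ..r, t ^ (-m) * Real.exp (β * t ^ 2))
      ≤ Real.exp (β * r ^ 2) * (ρ ^ (-(m - 1)) / (m - 1)) := hA
    _ = 4 * β * R ^ (m + 1) / ((m - 1) * ρ ^ (m - 1)) * Real.exp (β * (r ^ 2 - R ^ 2)) *
        (Real.exp (β * R ^ 2) * R ^ (-m) / (4 * β * R)) := key
    _ ≤ _ := mul_le_mul_of_nonneg_left hB hcoef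
end
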